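/- arXiv:2106.14473 — 3 statements merged into one kernel-verified Lean document; each statement's English description precedes it below -/
import Mathlib

section
/- Let d ∈ ℕ, T > 0, let D = (0,1)^d, let μ : ℝ^d → ℝ^d and σ : ℝ^d → ℝ^{d×d} be affine functions, and let u be a classical solution of the linear Kolmogorov PDE on D×[0,T]. If v ∈ C^2([0,T]×[0,1]^d) satisfies ‖u − v‖_{W^{2,∞}([0,T]×[0,1]^d)} ≤ ε for some ε > 0, then the residuals of v satisfy ‖R_i[v]‖_{L²(D×[0,T])} ≤ √T · sup_{x∈D̄}(1 + Σ_{i=1}^d |μ_i(x)| + ½ Σ_{i,j=1}^d |(σ(x)σ(x)^T)_{ij}|) · ε, ‖R_t[v]‖_{L²(D)} ≤ ε, and ‖R_s[v]‖_{L²(∂D×[0,T])} ≤ √(2dT) · ε. -/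
open MeasureTheory Matrix

/-- First-order partial derivative in direction `i`. -/
noncomputable def pd {n : ℕ} (f : (Fin n → ℝ) → ℝ) (i : Fin n) (x : Fin n → ℝ) : ℝ :=
  fderiv ℝ f x (Pi.single i 1)

/-- Second-order partial derivative in directions `i, j`. -/
noncomputable def pd2 {n : ℕ} (f : (Fin n → ℝ) → ℝ) (i j : Fin n) (x : Fin n → ℝ) : ℝ :=
  pd (pd f i) j x

/-- The spatial Kolmogorov operator
`L[v](x,t) = ½ Tr(σ(x)σ(x)ᵀ H_x[v](x,t)) + μ(x)·∇_x v(x,t)`. -/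
noncomputable def kolOp {d : ℕ} (μv : (Fin d → ℝ) → (Fin d → ℝ))
    (σm : (Fin d → ℝ) → Matrix (Fin d) (Fin d) ℝ)
    (v : (Fin d → ℝ) → ℝ → ℝ) (x : Fin d → ℝ) (t : ℝ) : ℝ :=
  (1 / 2) * ∑ i, ∑ j, (σm x * (σm x)ᵀ) i j * pd2 (fun y => v y t) i j x
    + ∑ i, μv x i * pd (fun y => v y t) i x

/-- Interior PINN residual `R_i[v](x,t) = ∂_t v(x,t) − L[v](x,t)`. -/
noncomputable def resInt {d : ℕ} (μv : (Fin d → ℝ) → (Fin d → ℝ))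
    (σm : (Fin d → ℝ) → Matrix (Fin d) (Fin d) ℝ)
    (v : (Fin d → ℝ) → ℝ → ℝ) (x : Fin d → ℝ) (t : ℝ) : ℝ :=
  deriv (v x) t - kolOp μv σm v x t

/-- The closed unit cube `[0,1]^d`. -/
def unitCube (d : ℕ) : Set (Fin d → ℝ) := Set.univ.pi fun _ => Set.Icc 0 1

/-- The open unit cube `D = (0,1)^d`. -/
def openCube (d : ℕ) : Set (Fin d → ℝ) := Set.univ.pi fun _ => Set.Ioo 0 1

section DerivLemmas
variable {d : ℕ} (W : (Fin d → ℝ) × ℝ → ℝ) (x : Fin d → ℝ) (t : ℝ)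

lemma deriv_time_eq (hW : DifferentiableAt ℝ W (x, t)) :
    deriv (fun s => W (x, s)) t = fderiv ℝ W (x, t) (0, 1) := by
  have hc : HasDerivAt (fun s : ℝ => (x, s)) ((0 : Fin d → ℝ), (1 : ℝ)) t :=
    (hasDerivAt_const t x).prodMk (hasDerivAt_id t)
  exact (hW.hasFDerivAt.comp_hasDerivAt t hc).deriv

lemma pd_space_eq (hW : DifferentiableAt ℝ W (x, t)) (i : Fin d) :
    pd (fun y => W (y, t)) i x = fderiv ℝ W (x, t) (Pi.single i 1, 0) := by
  have h : HasFDerivAt (fun y : Fin d → ℝ => W (y, t))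
      ((fderiv ℝ W (x, t)).comp (ContinuousLinearMap.inl ℝ (Fin d → ℝ) ℝ)) x :=
    hW.hasFDerivAt.comp x (hasFDerivAt_prodMk_left x t)
  rw [pd, h.fderiv]
  rfl

lemma pd2_space_eq (hW : ContDiffAt ℝ 2 W (x, t)) (i j : Fin d) :
    pd2 (fun y => W (y, t)) i j x
      = fderiv ℝ (fderiv ℝ W) (x, t) (Pi.single j 1, 0) (Pi.single i 1, 0) := by
  have hev : ∀ᶠ q in nhds (x, t), DifferentiableAt ℝ W q := by
    filter_upwards [hW.eventually (by norm_num)] with q hq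
    exact hq.differentiableAt two_ne_zero
  have htend : Filter.Tendsto (fun y : Fin d → ℝ => (y, t)) (nhds x) (nhds (x, t)) :=
    (Continuous.prodMk continuous_id continuous_const).continuousAt
  have hx_ev : ∀ᶠ y in nhds x, DifferentiableAt ℝ W (y, t) := htend.eventually hev
  have key : (fun y => pd (fun z => W (z, t)) i y)
      =ᶠ[nhds x] fun y => fderiv ℝ W (y, t) (Pi.single i 1, 0) := by
    filter_upwards [hx_ev] with y hy
    exact pd_space_eq W y t hy i
  have hF : DifferentiableAt ℝ (fderiv ℝ W) (x, t) :=
    (hW.fderiv_right (m := 1) (by norm_num)).differentiableAt one_ne_zero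
  have hcomp : HasFDerivAt (fun y : Fin d → ℝ => fderiv ℝ W (y, t))
      ((fderiv ℝ (fderiv ℝ W) (x, t)).comp (ContinuousLinearMap.inl ℝ (Fin d → ℝ) ℝ)) x :=
    hF.hasFDerivAt.comp x (hasFDerivAt_prodMk_left x t)
  have happ : HasFDerivAt (fun y : Fin d → ℝ => fderiv ℝ W (y, t) (Pi.single i 1, 0))
      ((ContinuousLinearMap.apply ℝ ℝ ((Pi.single i 1 : Fin d → ℝ), (0:ℝ))).comp
        ((fderiv ℝ (fderiv ℝ W) (x, t)).comp (ContinuousLinearMap.inl ℝ (Fin d → ℝ) ℝ))) x :=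
    ((ContinuousLinearMap.apply ℝ ℝ ((Pi.single i 1 : Fin d → ℝ), (0:ℝ))).hasFDerivAt).comp x hcomp
  rw [pd2, pd, key.fderiv_eq, happ.fderiv]
  rfl
end DerivLemmas

section Bounds
variable {E F : Type*} [NormedAddCommGroup E] [NormedSpace ℝ E] [NormedAddCommGroup F] [NormedSpace ℝ F]

lemma bound2' (f : E → F) (x a b : E) {ε : ℝ} (h2 : ‖iteratedFDeriv ℝ 2 f x‖ ≤ ε)
    (ha : ‖a‖ ≤ 1) (hb : ‖b‖ ≤ 1) : ‖fderiv ℝ (fderiv ℝ f) x a b‖ ≤ ε := by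
  have h := iteratedFDeriv_two_apply (𝕜 := ℝ) f x ![a, b]
  simp only [Matrix.cons_val_zero, Matrix.cons_val_one, Matrix.head_cons] at h
  rw [← h]
  have h1 := (iteratedFDeriv ℝ 2 f x).le_opNorm ![a, b]
  rw [Fin.prod_univ_two] at h1
  simp only [Matrix.cons_val_zero, Matrix.cons_val_one, Matrix.head_cons] at h1
  have hab : ‖a‖ * ‖b‖ ≤ 1 := mul_le_one₀ ha (norm_nonneg _) hb
  have hε0 : 0 ≤ ε := le_trans (norm_nonneg _) h2
  calc ‖(iteratedFDeriv ℝ 2 f x) ![a, b]‖ ≤ ‖iteratedFDeriv ℝ 2 f x‖ * (‖a‖ * ‖b‖) := h1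
    _ ≤ ε * 1 := mul_le_mul h2 hab (by positivity) hε0
    _ = ε := mul_one ε

lemma bound1' (f : E → F) (x a : E) {ε : ℝ} (h1 : ‖iteratedFDeriv ℝ 1 f x‖ ≤ ε)
    (ha : ‖a‖ ≤ 1) : ‖fderiv ℝ f x a‖ ≤ ε := by
  have h := iteratedFDeriv_one_apply (𝕜 := ℝ) (f := f) (x := x) ![a]
  simp only [Matrix.cons_val_zero] at h
  rw [← h]
  have hle := (iteratedFDeriv ℝ 1 f x).le_opNorm ![a]
  rw [Fin.prod_univ_one] at hle
  simp only [Matrix.cons_val_zero] at hle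
  have hε0 : 0 ≤ ε := le_trans (norm_nonneg _) h1
  calc ‖(iteratedFDeriv ℝ 1 f x) ![a]‖ ≤ ‖iteratedFDeriv ℝ 1 f x‖ * ‖a‖ := hle
    _ ≤ ε * 1 := mul_le_mul h1 ha (norm_nonneg _) hε0
    _ = ε := mul_one ε
end Bounds

lemma norm_single_one {d : ℕ} (i : Fin d) : ‖((Pi.single i (1:ℝ) : Fin d → ℝ), (0:ℝ))‖ ≤ 1 := by
  rw [Prod.norm_def]
  simp [Pi.norm_single]

lemma resInt_pointwise_bound {d : ℕ} (μv : (Fin d → ℝ) → (Fin d → ℝ))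
    (σm : (Fin d → ℝ) → Matrix (Fin d) (Fin d) ℝ) (u v : (Fin d → ℝ) → ℝ → ℝ)
    (x : Fin d → ℝ) (t : ℝ) {ε : ℝ}
    (hU : ContDiffAt ℝ 2 (fun p : (Fin d → ℝ) × ℝ => u p.1 p.2) (x, t))
    (hV : ContDiffAt ℝ 2 (fun p : (Fin d → ℝ) × ℝ => v p.1 p.2) (x, t))
    (hpde : deriv (u x) t = kolOp μv σm u x t)
    (h1 : ‖iteratedFDeriv ℝ 1 (fun p : (Fin d → ℝ) × ℝ => u p.1 p.2 - v p.1 p.2) (x, t)‖ ≤ ε)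
    (h2 : ‖iteratedFDeriv ℝ 2 (fun p : (Fin d → ℝ) × ℝ => u p.1 p.2 - v p.1 p.2) (x, t)‖ ≤ ε) :
    |resInt μv σm v x t|
      ≤ (1 + ∑ i, |μv x i| + (1 / 2) * ∑ i, ∑ j, |(σm x * (σm x)ᵀ) i j|) * ε := by
  set U : (Fin d → ℝ) × ℝ → ℝ := fun p => u p.1 p.2 with hUdef
  set V : (Fin d → ℝ) × ℝ → ℝ := fun p => v p.1 p.2 with hVdef
  set W : (Fin d → ℝ) × ℝ → ℝ := fun p => u p.1 p.2 - v p.1 p.2 with hWdef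
  have hW : ContDiffAt ℝ 2 W (x, t) := hU.sub hV
  have hUd : DifferentiableAt ℝ U (x, t) := hU.differentiableAt two_ne_zero
  have hVd : DifferentiableAt ℝ V (x, t) := hV.differentiableAt two_ne_zero
  have hWd : DifferentiableAt ℝ W (x, t) := hUd.sub hVd
  have hfd : fderiv ℝ W (x, t) = fderiv ℝ U (x, t) - fderiv ℝ V (x, t) := by
    have : W = fun p => U p - V p := rfl
    rw [this, fderiv_fun_sub hUd hVd]
  -- second derivative linearity
  have hUF : DifferentiableAt ℝ (fderiv ℝ U) (x, t) :=
    (hU.fderiv_right (m := 1) (by norm_num)).differentiableAt one_ne_zero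
  have hVF : DifferentiableAt ℝ (fderiv ℝ V) (x, t) :=
    (hV.fderiv_right (m := 1) (by norm_num)).differentiableAt one_ne_zero
  have hfd2 : fderiv ℝ (fderiv ℝ W) (x, t)
      = fderiv ℝ (fderiv ℝ U) (x, t) - fderiv ℝ (fderiv ℝ V) (x, t) := by
    have hev : fderiv ℝ W =ᶠ[nhds (x, t)] fun q => fderiv ℝ U q - fderiv ℝ V q := by
      have hevU : ∀ᶠ q in nhds (x, t), DifferentiableAt ℝ U q := by
        filter_upwards [hU.eventually (by norm_num)] with q hq
        exact hq.differentiableAt two_ne_zero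
      have hevV : ∀ᶠ q in nhds (x, t), DifferentiableAt ℝ V q := by
        filter_upwards [hV.eventually (by norm_num)] with q hq
        exact hq.differentiableAt two_ne_zero
      filter_upwards [hevU, hevV] with q hqU hqV
      have : W = fun p => U p - V p := rfl
      rw [this, fderiv_fun_sub hqU hqV]
    rw [hev.fderiv_eq, fderiv_fun_sub hUF hVF]
  -- time derivative
  have et : deriv (v x) t = deriv (u x) t - fderiv ℝ W (x, t) (0, 1) := by
    have h1' : deriv (fun s => W (x, s)) t = fderiv ℝ W (x, t) (0, 1) := deriv_time_eq W x t hWd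
    have h2' : deriv (fun s => U (x, s)) t = fderiv ℝ U (x, t) (0, 1) := deriv_time_eq U x t hUd
    have h3' : deriv (fun s => V (x, s)) t = fderiv ℝ V (x, t) (0, 1) := deriv_time_eq V x t hVd
    have hu : deriv (u x) t = fderiv ℝ U (x, t) (0, 1) := h2'
    have hv : deriv (v x) t = fderiv ℝ V (x, t) (0, 1) := h3'
    rw [hu, hv, hfd]
    simp
  -- space first derivatives
  have es : ∀ i, pd (fun y => v y t) i x
      = pd (fun y => u y t) i x - fderiv ℝ W (x, t) (Pi.single i 1, 0) := by
    intro i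
    have h2' : pd (fun y => u y t) i x = fderiv ℝ U (x, t) (Pi.single i 1, 0) :=
      pd_space_eq U x t hUd i
    have h3' : pd (fun y => v y t) i x = fderiv ℝ V (x, t) (Pi.single i 1, 0) :=
      pd_space_eq V x t hVd i
    rw [h2', h3', hfd]
    simp
  -- space second derivatives
  have es2 : ∀ i j, pd2 (fun y => v y t) i j x
      = pd2 (fun y => u y t) i j x
        - fderiv ℝ (fderiv ℝ W) (x, t) (Pi.single j 1, 0) (Pi.single i 1, 0) := by
    intro i j
    have h2' : pd2 (fun y => u y t) i j x
        = fderiv ℝ (fderiv ℝ U) (x, t) (Pi.single j 1, 0) (Pi.single i 1, 0) :=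
      pd2_space_eq U x t hU i j
    have h3' : pd2 (fun y => v y t) i j x
        = fderiv ℝ (fderiv ℝ V) (x, t) (Pi.single j 1, 0) (Pi.single i 1, 0) :=
      pd2_space_eq V x t hV i j
    rw [h2', h3', hfd2]
    simp
  -- rewrite resInt v
  set A : ℝ := fderiv ℝ W (x, t) (0, 1) with hA
  set B : Fin d → ℝ := fun i => fderiv ℝ W (x, t) (Pi.single i 1, 0) with hB
  set C : Fin d → Fin d → ℝ :=
    fun i j => fderiv ℝ (fderiv ℝ W) (x, t) (Pi.single j 1, 0) (Pi.single i 1, 0) with hC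
  have hkol : kolOp μv σm v x t = kolOp μv σm u x t
      - ((1 / 2) * ∑ i, ∑ j, (σm x * (σm x)ᵀ) i j * C i j + ∑ i, μv x i * B i) := by
    rw [kolOp, kolOp]
    simp only [es, es2, mul_sub, Finset.sum_sub_distrib]
    ring
  have hres : resInt μv σm v x t
      = -A + (1 / 2) * ∑ i, ∑ j, (σm x * (σm x)ᵀ) i j * C i j + ∑ i, μv x i * B i := by
    rw [resInt, et, hpde, hkol]
    ring
  -- bounds
  have hε0 : 0 ≤ ε := le_trans (norm_nonneg _) h1
  have hAb : |A| ≤ ε := by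
    have := bound1' W (x, t) (0, 1) h1 (by rw [Prod.norm_def]; simp)
    simpa using this
  have hBb : ∀ i, |B i| ≤ ε := fun i => by
    have := bound1' W (x, t) (Pi.single i 1, 0) h1 (norm_single_one i)
    simpa using this
  have hCb : ∀ i j, |C i j| ≤ ε := fun i j => by
    have := bound2' W (x, t) (Pi.single j 1, 0) (Pi.single i 1, 0) h2
      (norm_single_one j) (norm_single_one i)
    simpa using this
  rw [hres]
  have step1 : |(-A) + (1 / 2) * ∑ i, ∑ j, (σm x * (σm x)ᵀ) i j * C i j + ∑ i, μv x i * B i|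
      ≤ |A| + (1 / 2) * ∑ i, ∑ j, |(σm x * (σm x)ᵀ) i j| * ε + ∑ i, |μv x i| * ε := by
    have hsum2 : |∑ i, ∑ j, (σm x * (σm x)ᵀ) i j * C i j|
        ≤ ∑ i, ∑ j, |(σm x * (σm x)ᵀ) i j| * ε := by
      refine le_trans (Finset.abs_sum_le_sum_abs _ _) (Finset.sum_le_sum fun i _ => ?_)
      refine le_trans (Finset.abs_sum_le_sum_abs _ _) (Finset.sum_le_sum fun j _ => ?_)
      rw [abs_mul]
      exact mul_le_mul_of_nonneg_left (hCb i j) (abs_nonneg _)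
    have hsum1 : |∑ i, μv x i * B i| ≤ ∑ i, |μv x i| * ε := by
      refine le_trans (Finset.abs_sum_le_sum_abs _ _) (Finset.sum_le_sum fun i _ => ?_)
      rw [abs_mul]
      exact mul_le_mul_of_nonneg_left (hBb i) (abs_nonneg _)
    calc |(-A) + (1 / 2) * ∑ i, ∑ j, (σm x * (σm x)ᵀ) i j * C i j + ∑ i, μv x i * B i|
        ≤ |(-A)| + |(1 / 2) * ∑ i, ∑ j, (σm x * (σm x)ᵀ) i j * C i j| + |∑ i, μv x i * B i| :=
          (abs_add_le _ _).trans (add_le_add_left (abs_add_le _ _) _)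
      _ ≤ |A| + (1 / 2) * ∑ i, ∑ j, |(σm x * (σm x)ᵀ) i j| * ε + ∑ i, |μv x i| * ε := by
          rw [abs_neg, abs_mul]
          refine add_le_add (add_le_add le_rfl ?_) hsum1
          have : |(1:ℝ) / 2| = 1 / 2 := by norm_num
          rw [this]
          exact mul_le_mul_of_nonneg_left hsum2 (by norm_num)
  refine step1.trans ?_
  have : (1 + ∑ i, |μv x i| + (1 / 2) * ∑ i, ∑ j, |(σm x * (σm x)ᵀ) i j|) * ε
      = ε + (1 / 2) * ∑ i, ∑ j, |(σm x * (σm x)ᵀ) i j| * ε + ∑ i, |μv x i| * ε := by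
    have e1 : (∑ i, |μv x i|) * ε = ∑ i, |μv x i| * ε := Finset.sum_mul _ _ _
    have e2 : (∑ i, ∑ j, |(σm x * (σm x)ᵀ) i j|) * ε
        = ∑ i, ∑ j, |(σm x * (σm x)ᵀ) i j| * ε := by
      rw [Finset.sum_mul]
      exact Finset.sum_congr rfl fun i _ => Finset.sum_mul _ _ _
    rw [add_mul, add_mul, one_mul, e1, mul_assoc, e2]
    ring
  rw [this]
  exact add_le_add (add_le_add hAb le_rfl) le_rfl


section MainHelpers

open Filter

lemma openCube_subset_unitCube {d : ℕ} : openCube d ⊆ unitCube d :=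
  Set.pi_mono fun _ _ => Set.Ioo_subset_Icc_self

lemma measurableSet_openCube {d : ℕ} : MeasurableSet (openCube d) :=
  MeasurableSet.univ_pi fun _ => measurableSet_Ioo

lemma measurableSet_unitCube {d : ℕ} : MeasurableSet (unitCube d) :=
  MeasurableSet.univ_pi fun _ => measurableSet_Icc

lemma volume_openCube {d : ℕ} : volume (openCube d) = 1 := by
  rw [openCube, volume_pi_pi]; simp

lemma volume_unitCube {d : ℕ} : volume (unitCube d) = 1 := by
  rw [unitCube, volume_pi_pi]; simp

end MainHelpers

/-- **Small residuals from `W^{2,∞}`-approximation of the solution.**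
If `u` is a classical solution of the linear Kolmogorov PDE (`μ, σ` affine) on
`D×[0,T]`, `D = (0,1)^d`, and `v ∈ C²` satisfies `‖u − v‖_{W^{2,∞}} ≤ ε`, then
`‖R_i[v]‖_{L²(D×[0,T])} ≤ √T · sup_{x∈D̄}(1 + Σᵢ|μᵢ| + ½ Σᵢⱼ|(σσᵀ)ᵢⱼ|) · ε`,
`‖R_t[v]‖_{L²(D)} ≤ ε` and `‖R_s[v]‖_{L²(∂D×[0,T])} ≤ √(2dT) · ε`, where
`φ, ψ` are the traces of `u` and the boundary integral is the sum over the `2d` faces. -/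
theorem residuals_small_of_W2inf_close
    {d : ℕ} (T : ℝ) (hT : 0 < T) (ε : ℝ) (hε : 0 < ε)
    (μA : (Fin d → ℝ) →ᵃ[ℝ] (Fin d → ℝ))
    (σA : (Fin d → ℝ) →ᵃ[ℝ] Matrix (Fin d) (Fin d) ℝ)
    (u v : (Fin d → ℝ) → ℝ → ℝ)
    (hu : ContDiffOn ℝ 2 (fun p : (Fin d → ℝ) × ℝ => u p.1 p.2)
      (unitCube d ×ˢ Set.Icc 0 T))
    (hv : ContDiffOn ℝ 2 (fun p : (Fin d → ℝ) × ℝ => v p.1 p.2)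
      (unitCube d ×ˢ Set.Icc 0 T))
    (hpde : ∀ x ∈ openCube d, ∀ t ∈ Set.Icc (0 : ℝ) T,
      deriv (u x) t = kolOp (fun y => μA y) (fun y => σA y) u x t)
    (hclose : ∀ k : ℕ, k ≤ 2 → ∀ x ∈ unitCube d, ∀ t ∈ Set.Icc (0 : ℝ) T,
      ‖iteratedFDeriv ℝ k (fun p : (Fin d → ℝ) × ℝ => u p.1 p.2 - v p.1 p.2) (x, t)‖ ≤ ε) :
    Real.sqrt (∫ t in Set.Icc (0 : ℝ) T, ∫ x in openCube d,
        (resInt (fun y => μA y) (fun y => σA y) v x t) ^ 2)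
      ≤ Real.sqrt T *
        (⨆ x : unitCube d, (1 + ∑ i, |μA (x : Fin d → ℝ) i|
          + (1 / 2) * ∑ i, ∑ j,
            |(σA (x : Fin d → ℝ) * (σA (x : Fin d → ℝ))ᵀ) i j|)) * ε ∧
    Real.sqrt (∫ x in openCube d, (v x 0 - u x 0) ^ 2) ≤ ε ∧
    Real.sqrt (∑ i : Fin d, ∑ c : Fin 2, ∫ t in Set.Icc (0 : ℝ) T, ∫ y in unitCube d,
        (v (Function.update y i ((c : ℕ) : ℝ)) t
          - u (Function.update y i ((c : ℕ) : ℝ)) t) ^ 2)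
      ≤ Real.sqrt (2 * d * T) * ε := by
  classical
  -- notation
  set S : Set ((Fin d → ℝ) × ℝ) := unitCube d ×ˢ Set.Icc 0 T with hS
  have hε0 : (0:ℝ) ≤ ε := hε.le
  -- membership facts
  have hzero_mem : (fun _ : Fin d => (0:ℝ)) ∈ unitCube d := by
    intro k _; exact ⟨le_refl 0, zero_le_one⟩
  have ht0 : (0:ℝ) ∈ Set.Icc (0:ℝ) T := ⟨le_rfl, hT.le⟩
  -- the function g and its sup M
  set g : (Fin d → ℝ) → ℝ := fun y => 1 + ∑ i, |μA y i|
    + (1 / 2) * ∑ i, ∑ j, |(σA y * (σA y)ᵀ) i j| with hg_def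
  set M : ℝ := ⨆ x : unitCube d, (1 + ∑ i, |μA (x : Fin d → ℝ) i|
    + (1 / 2) * ∑ i, ∑ j, |(σA (x : Fin d → ℝ) * (σA (x : Fin d → ℝ))ᵀ) i j|) with hM_def
  have hμc : Continuous fun y : Fin d → ℝ => μA y := by
    have : Continuous μA.linear := μA.linear.continuous_of_finiteDimensional
    exact AffineMap.continuous_linear_iff.mp this
  have hσc : Continuous fun y : Fin d → ℝ => σA y := by
    have h1 : Continuous σA.linear := σA.linear.continuous_of_finiteDimensional
    have h2 : (fun y => σA y) = fun y => σA.linear y + σA 0 := by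
      funext y
      have := σA.map_vadd (0 : Fin d → ℝ) y
      simpa [vadd_eq_add] using this
    rw [h2]
    exact h1.add continuous_const
  have hgc : Continuous g := by
    refine (continuous_const.add ?_).add (continuous_const.mul ?_)
    · exact continuous_finset_sum _ fun i _ =>
        continuous_abs.comp ((continuous_apply i).comp hμc)
    · refine continuous_finset_sum _ fun i _ => continuous_finset_sum _ fun j _ => ?_
      refine continuous_abs.comp ?_
      simp only [Matrix.mul_apply, Matrix.transpose_apply]
      exact continuous_finset_sum _ fun k _ =>
        (((continuous_apply k).comp ((continuous_apply i).comp hσc)).mul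
          ((continuous_apply k).comp ((continuous_apply j).comp hσc)))
  have hcube_cpt : IsCompact (unitCube d) := isCompact_univ_pi fun _ => isCompact_Icc
  have hbdd : BddAbove (Set.range fun x : unitCube d => g (x : Fin d → ℝ)) := by
    have hr : Set.range (fun x : unitCube d => g (x : Fin d → ℝ)) = g '' unitCube d := by
      ext r
      constructor
      · rintro ⟨⟨y, hy⟩, rfl⟩; exact ⟨y, hy, rfl⟩
      · rintro ⟨y, hy, rfl⟩; exact ⟨⟨y, hy⟩, rfl⟩
    rw [hr]
    exact (hcube_cpt.image_of_continuousOn hgc.continuousOn).bddAbove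
  have hMsup : ∀ y ∈ unitCube d, g y ≤ M :=
    fun y hy => le_ciSup hbdd (⟨y, hy⟩ : unitCube d)
  have hg1 : ∀ y, (1:ℝ) ≤ g y := by
    intro y
    have h1 : (0:ℝ) ≤ ∑ i, |μA y i| := Finset.sum_nonneg fun i _ => abs_nonneg _
    have h2 : (0:ℝ) ≤ ∑ i, ∑ j, |(σA y * (σA y)ᵀ) i j| :=
      Finset.sum_nonneg fun i _ => Finset.sum_nonneg fun j _ => abs_nonneg _
    simp only [hg_def]
    nlinarith
  have hM1 : (1:ℝ) ≤ M := le_trans (hg1 _) (hMsup _ hzero_mem)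
  have hM0 : (0:ℝ) ≤ M := le_trans zero_le_one hM1
  have hC0 : (0:ℝ) ≤ M * ε := mul_nonneg hM0 hε0
  -- ContDiffAt at interior points
  have hopen : IsOpen (openCube d ×ˢ Set.Ioo (0:ℝ) T) :=
    (isOpen_set_pi Set.finite_univ fun _ _ => isOpen_Ioo).prod isOpen_Ioo
  have hsubS : openCube d ×ˢ Set.Ioo (0:ℝ) T ⊆ S :=
    Set.prod_mono openCube_subset_unitCube Set.Ioo_subset_Icc_self
  have hptbound : ∀ x ∈ openCube d, ∀ t ∈ Set.Ioo (0:ℝ) T,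
      |resInt (fun y => μA y) (fun y => σA y) v x t| ≤ M * ε := by
    intro x hx t ht
    have hmemS : S ∈ nhds (x, t) :=
      Filter.mem_of_superset (hopen.mem_nhds ⟨hx, ht⟩) hsubS
    have hUat : ContDiffAt ℝ 2 (fun p : (Fin d → ℝ) × ℝ => u p.1 p.2) (x, t) :=
      hu.contDiffAt hmemS
    have hVat : ContDiffAt ℝ 2 (fun p : (Fin d → ℝ) × ℝ => v p.1 p.2) (x, t) :=
      hv.contDiffAt hmemS
    have hx' : x ∈ unitCube d := openCube_subset_unitCube hx
    have ht' : t ∈ Set.Icc (0:ℝ) T := Set.Ioo_subset_Icc_self ht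
    have hb := resInt_pointwise_bound (fun y => μA y) (fun y => σA y) u v x t
      hUat hVat (hpde x hx t ht')
      (hclose 1 (by norm_num) x hx' t ht') (hclose 2 le_rfl x hx' t ht')
    refine hb.trans ?_
    exact mul_le_mul_of_nonneg_right (hMsup x hx') hε0
  -- PART 1
  have hvolD : volume (openCube d) < ⊤ := by rw [volume_openCube]; exact ENNReal.one_lt_top
  have hvolDr : (volume (openCube d)).toReal = 1 := by rw [volume_openCube]; rfl
  have inner1 : ∀ t ∈ Set.Ioo (0:ℝ) T,
      |∫ x in openCube d, (resInt (fun y => μA y) (fun y => σA y) v x t) ^ 2|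
        ≤ (M * ε) ^ 2 := by
    intro t ht
    have hb : ∀ x ∈ openCube d,
        ‖(resInt (fun y => μA y) (fun y => σA y) v x t) ^ 2‖ ≤ (M * ε) ^ 2 := by
      intro x hx
      rw [Real.norm_eq_abs, abs_of_nonneg (sq_nonneg _), ← sq_abs]
      exact pow_le_pow_left₀ (abs_nonneg _) (hptbound x hx t ht) 2
    have := norm_setIntegral_le_of_norm_le_const hvolD hb
    rw [Measure.real, Real.norm_eq_abs, hvolDr, mul_one] at this
    exact this
  have outer1 : ∫ t in Set.Icc (0:ℝ) T, ∫ x in openCube d,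
      (resInt (fun y => μA y) (fun y => σA y) v x t) ^ 2 ≤ (M * ε) ^ 2 * T := by
    rw [integral_Icc_eq_integral_Ioo]
    have hvolT : volume (Set.Ioo (0:ℝ) T) < ⊤ := by
      rw [Real.volume_Ioo]; exact ENNReal.ofReal_lt_top
    have hvolTr : (volume (Set.Ioo (0:ℝ) T)).toReal = T := by
      rw [Real.volume_Ioo]; simp [hT.le]
    have hb : ∀ t ∈ Set.Ioo (0:ℝ) T,
        ‖∫ x in openCube d, (resInt (fun y => μA y) (fun y => σA y) v x t) ^ 2‖
          ≤ (M * ε) ^ 2 := by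
      intro t ht; rw [Real.norm_eq_abs]; exact inner1 t ht
    have := norm_setIntegral_le_of_norm_le_const hvolT hb
    rw [Measure.real, Real.norm_eq_abs, hvolTr] at this
    exact (le_abs_self _).trans this
  have part1 : Real.sqrt (∫ t in Set.Icc (0 : ℝ) T, ∫ x in openCube d,
      (resInt (fun y => μA y) (fun y => σA y) v x t) ^ 2) ≤ Real.sqrt T * M * ε := by
    refine (Real.sqrt_le_sqrt outer1).trans ?_
    rw [Real.sqrt_mul (sq_nonneg _), Real.sqrt_sq hC0]
    have : M * ε * Real.sqrt T = Real.sqrt T * M * ε := by ring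
    rw [this]
  -- PART 2
  have part2 : Real.sqrt (∫ x in openCube d, (v x 0 - u x 0) ^ 2) ≤ ε := by
    have hb : ∀ x ∈ openCube d, ‖(v x 0 - u x 0) ^ 2‖ ≤ ε ^ 2 := by
      intro x hx
      have h0 := hclose 0 (by norm_num) x (openCube_subset_unitCube hx) 0 ht0
      rw [norm_iteratedFDeriv_zero] at h0
      have habs : |v x 0 - u x 0| ≤ ε := by
        rw [abs_sub_comm]
        simpa [Real.norm_eq_abs] using h0
      rw [Real.norm_eq_abs, abs_of_nonneg (sq_nonneg _), ← sq_abs]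
      exact pow_le_pow_left₀ (abs_nonneg _) habs 2
    have := norm_setIntegral_le_of_norm_le_const hvolD hb
    rw [Measure.real, Real.norm_eq_abs, hvolDr, mul_one] at this
    have hle : ∫ x in openCube d, (v x 0 - u x 0) ^ 2 ≤ ε ^ 2 := (le_abs_self _).trans this
    refine (Real.sqrt_le_sqrt hle).trans ?_
    rw [Real.sqrt_sq hε0]
  -- PART 3
  have hvolU : volume (unitCube d) < ⊤ := by rw [volume_unitCube]; exact ENNReal.one_lt_top
  have hvolUr : (volume (unitCube d)).toReal = 1 := by rw [volume_unitCube]; rfl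
  have hterm : ∀ (i : Fin d) (c : Fin 2),
      ∫ t in Set.Icc (0:ℝ) T, ∫ y in unitCube d,
        (v (Function.update y i ((c : ℕ) : ℝ)) t
          - u (Function.update y i ((c : ℕ) : ℝ)) t) ^ 2 ≤ ε ^ 2 * T := by
    intro i c
    have hcmem : ((c : ℕ) : ℝ) ∈ Set.Icc (0:ℝ) 1 := by
      constructor
      · positivity
      · have : (c : ℕ) ≤ 1 := Nat.lt_succ_iff.mp c.isLt
        exact_mod_cast this
    have hupd : ∀ y ∈ unitCube d, Function.update y i ((c : ℕ) : ℝ) ∈ unitCube d := by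
      intro y hy k _
      rcases eq_or_ne k i with rfl | hk
      · rw [Function.update_self]; exact hcmem
      · rw [Function.update_of_ne hk]; exact hy k (Set.mem_univ k)
    rw [integral_Icc_eq_integral_Ioo]
    have hvolT : volume (Set.Ioo (0:ℝ) T) < ⊤ := by
      rw [Real.volume_Ioo]; exact ENNReal.ofReal_lt_top
    have hvolTr : (volume (Set.Ioo (0:ℝ) T)).toReal = T := by
      rw [Real.volume_Ioo]; simp [hT.le]
    have hbin : ∀ t ∈ Set.Ioo (0:ℝ) T,
        ‖∫ y in unitCube d, (v (Function.update y i ((c : ℕ) : ℝ)) t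
          - u (Function.update y i ((c : ℕ) : ℝ)) t) ^ 2‖ ≤ ε ^ 2 := by
      intro t ht
      have ht' : t ∈ Set.Icc (0:ℝ) T := Set.Ioo_subset_Icc_self ht
      have hb : ∀ y ∈ unitCube d,
          ‖(v (Function.update y i ((c : ℕ) : ℝ)) t
            - u (Function.update y i ((c : ℕ) : ℝ)) t) ^ 2‖ ≤ ε ^ 2 := by
        intro y hy
        have h0 := hclose 0 (by norm_num) _ (hupd y hy) t ht'
        rw [norm_iteratedFDeriv_zero] at h0
        have habs : |v (Function.update y i ((c : ℕ) : ℝ)) t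
            - u (Function.update y i ((c : ℕ) : ℝ)) t| ≤ ε := by
          rw [abs_sub_comm]
          simpa [Real.norm_eq_abs] using h0
        rw [Real.norm_eq_abs, abs_of_nonneg (sq_nonneg _), ← sq_abs]
        exact pow_le_pow_left₀ (abs_nonneg _) habs 2
      have := norm_setIntegral_le_of_norm_le_const hvolU hb
      rw [Measure.real, hvolUr, mul_one] at this
      exact this
    have := norm_setIntegral_le_of_norm_le_const hvolT hbin
    rw [Measure.real, Real.norm_eq_abs, hvolTr] at this
    exact (le_abs_self _).trans this
  have hsum3 : (∑ i : Fin d, ∑ c : Fin 2, ∫ t in Set.Icc (0 : ℝ) T, ∫ y in unitCube d,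
      (v (Function.update y i ((c : ℕ) : ℝ)) t
        - u (Function.update y i ((c : ℕ) : ℝ)) t) ^ 2) ≤ 2 * d * T * ε ^ 2 := by
    calc (∑ i : Fin d, ∑ c : Fin 2, ∫ t in Set.Icc (0 : ℝ) T, ∫ y in unitCube d,
        (v (Function.update y i ((c : ℕ) : ℝ)) t
          - u (Function.update y i ((c : ℕ) : ℝ)) t) ^ 2)
        ≤ ∑ _i : Fin d, ∑ _c : Fin 2, ε ^ 2 * T := by
          refine Finset.sum_le_sum fun i _ => Finset.sum_le_sum fun c _ => hterm i c
      _ = 2 * d * T * ε ^ 2 := by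
          simp [Finset.sum_const]
          ring
  have part3 : Real.sqrt (∑ i : Fin d, ∑ c : Fin 2, ∫ t in Set.Icc (0 : ℝ) T,
      ∫ y in unitCube d, (v (Function.update y i ((c : ℕ) : ℝ)) t
        - u (Function.update y i ((c : ℕ) : ℝ)) t) ^ 2) ≤ Real.sqrt (2 * d * T) * ε := by
    refine (Real.sqrt_le_sqrt hsum3).trans ?_
    rw [Real.sqrt_mul (by positivity), Real.sqrt_sq hε0]
  exact ⟨part1, part2, part3⟩
end

section
/- Let d, L, W ∈ ℕ with L, W ≥ 2, R ≥ 1, a < b, let σ : ℝ → ℝ be continuously differentiable with bounded value and derivative, and let θ, ϑ be parameters of neural networks with activation σ, the same architecture with at most L layers, widths at most W (with l_0 = d), and all weights and biases in [−R,R]. Set α = max{1, |a|, |b|, ‖σ‖_∞} and β = max{1, ‖σ'‖_∞}. Then for every 1 ≤ K ≤ L, sup_{x ∈ [a,b]^d} ‖(f_K^θ ∘ ⋯ ∘ f_1^θ)(x) − (f_K^ϑ ∘ ⋯ ∘ f_1^ϑ)(x)‖_∞ ≤ α (d+4) W^{K−1} R^{K−1} β^K ‖θ − ϑ‖_∞,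 where ‖θ − ϑ‖_∞ is the maximum over all corresponding weight and bias entries of their absolute difference and ‖·‖_∞ on vectors is the entrywise supremum norm. -/
/-- Parameters (weights and biases) of a fully connected network with widths `l`. -/
abbrev NNParams (l : ℕ → ℕ) : Type :=
  ∀ k : ℕ, (Fin (l (k + 1)) → Fin (l k) → ℝ) × (Fin (l (k + 1)) → ℝ)

/-- The affine map `z ↦ W_k z + b_k` of layer `k`. -/
noncomputable def layerAffine {l : ℕ → ℕ} (A : NNParams l) (k : ℕ)
    (z : Fin (l k) → ℝ) (i : Fin (l (k + 1))) : ℝ :=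
  ∑ j, (A k).1 i j * z j + (A k).2 i

/-- Layer map number `k` (layers are numbered `0,…,L-1`): the activation `σ` is applied
after the affine map in every layer except the last one, which is purely affine. -/
noncomputable def layerFun (σ : ℝ → ℝ) (L : ℕ) {l : ℕ → ℕ} (A : NNParams l) (k : ℕ)
    (z : Fin (l k) → ℝ) (i : Fin (l (k + 1))) : ℝ :=
  if k + 1 = L then layerAffine A k z i else σ (layerAffine A k z i)

/-- Output of the first `K` layers of the network with `L` layers,
i.e. `f_K ∘ ⋯ ∘ f_1`. -/
noncomputable def nnFwd (σ : ℝ → ℝ) (L : ℕ) {l : ℕ → ℕ} (A : NNParams l) :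
    (K : ℕ) → (Fin (l 0) → ℝ) → Fin (l K) → ℝ
  | 0, z => z
  | K + 1, z => layerFun σ L A K (nnFwd σ L A K z)

/-- All weights and biases of the first `L` layers lie in `[-R, R]`. -/
def NNParams.inCube {l : ℕ → ℕ} (A : NNParams l) (L : ℕ) (R : ℝ) : Prop :=
  ∀ k < L, (∀ i j, |(A k).1 i j| ≤ R) ∧ (∀ i, |(A k).2 i| ≤ R)

/-- Supremum distance `‖θ − ϑ‖_∞` between the entries of two parameter vectors. -/
noncomputable def paramDist {l : ℕ → ℕ} (L : ℕ) (A B : NNParams l) : ℝ :=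
  ⨆ k : Fin L, max (⨆ i, ⨆ j, |(A (k : ℕ)).1 i j - (B (k : ℕ)).1 i j|)
    (⨆ i, |(A (k : ℕ)).2 i - (B (k : ℕ)).2 i|)

set_option maxHeartbeats 1000000 in
/-- **Lipschitz continuity of a neural network in its parameters.**
For networks with `L` layers, widths at most `W` (input width `d`), weights and biases
bounded by `R ≥ 1`, and a `C¹` activation `σ` with bounded value and derivative, for
every `1 ≤ K ≤ L`,
`sup_{x∈[a,b]^d} ‖(f_K^θ∘⋯∘f_1^θ)(x) − (f_K^ϑ∘⋯∘f_1^ϑ)(x)‖_∞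
  ≤ α (d+4) W^{K−1} R^{K−1} β^K ‖θ−ϑ‖_∞`,
where `α = max{1,|a|,|b|,‖σ‖_∞}` and `β = max{1,‖σ'‖_∞}`. -/
theorem nn_lipschitz_in_params
    (d L W : ℕ) (hL : 2 ≤ L) (hW : 2 ≤ W) (R : ℝ) (hR : 1 ≤ R)
    (a b : ℝ) (hab : a < b)
    (σ : ℝ → ℝ) (hσ : ContDiff ℝ 1 σ)
    (hσbd : BddAbove (Set.range fun x => |σ x|))
    (hσ'bd : BddAbove (Set.range fun x => |deriv σ x|))
    (l : ℕ → ℕ) (hl0 : l 0 = d) (hlW : ∀ k, 0 < k → l k ≤ W)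
    (A B : NNParams l) (hA : A.inCube L R) (hB : B.inCube L R)
    (α β : ℝ)
    (hα : α = max 1 (max |a| (max |b| (⨆ x : ℝ, |σ x|))))
    (hβ : β = max 1 (⨆ x : ℝ, |deriv σ x|)) :
    ∀ K : ℕ, 1 ≤ K → K ≤ L →
      ∀ x : Fin (l 0) → ℝ, (∀ i, x i ∈ Set.Icc a b) →
        ∀ i : Fin (l K),
          |nnFwd σ L A K x i - nnFwd σ L B K x i|
            ≤ α * (d + 4) * (W : ℝ) ^ (K - 1) * R ^ (K - 1) * β ^ K
              * paramDist L A B := by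
  intro K hK1 hKL x hx
  set δ := paramDist L A B with hδdef
  -- basic constants
  have hα1 : (1:ℝ) ≤ α := by rw [hα]; exact le_max_left _ _
  have hβ1 : (1:ℝ) ≤ β := by rw [hβ]; exact le_max_left _ _
  have hα0 : (0:ℝ) ≤ α := by linarith
  have hβ0 : (0:ℝ) ≤ β := by linarith
  have hR0 : (0:ℝ) ≤ R := by linarith
  have haα : |a| ≤ α := by
    rw [hα]; exact le_max_of_le_right (le_max_left _ _)
  have hbα : |b| ≤ α := by
    rw [hα]; exact le_max_of_le_right (le_max_of_le_right (le_max_left _ _))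
  have hσα : ∀ y, |σ y| ≤ α := by
    intro y
    have h1 : |σ y| ≤ ⨆ x : ℝ, |σ x| := le_ciSup hσbd y
    refine h1.trans ?_
    rw [hα]
    exact le_max_of_le_right (le_max_of_le_right (le_max_right _ _))
  have hσ'β : ∀ y, |deriv σ y| ≤ β := by
    intro y
    have h1 : |deriv σ y| ≤ ⨆ x : ℝ, |deriv σ x| := le_ciSup hσ'bd y
    refine h1.trans ?_
    rw [hβ]; exact le_max_right _ _
  -- Lipschitz bound on σ
  have hlip : ∀ u v : ℝ, |σ u - σ v| ≤ β * |u - v| := by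
    intro u v
    have h := Convex.norm_image_sub_le_of_norm_deriv_le (f := σ)
      (s := Set.univ)
      (fun y _ => (hσ.differentiable one_ne_zero) y)
      (fun y _ => by simpa [Real.norm_eq_abs] using hσ'β y)
      convex_univ (Set.mem_univ v) (Set.mem_univ u)
    simpa [Real.norm_eq_abs] using h
  -- bounds on paramDist
  have hδW : ∀ k, k < L → ∀ i j, |(A k).1 i j - (B k).1 i j| ≤ δ := by
    intro k hk i j
    have h1 : |(A k).1 i j - (B k).1 i j| ≤ ⨆ j', |(A k).1 i j' - (B k).1 i j'| :=
      le_ciSup (f := fun j' => |(A k).1 i j' - (B k).1 i j'|)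
        (Set.Finite.bddAbove (Set.finite_range _)) j
    have h2 : (⨆ j', |(A k).1 i j' - (B k).1 i j'|)
        ≤ ⨆ i', ⨆ j', |(A k).1 i' j' - (B k).1 i' j'| :=
      le_ciSup (f := fun i' => ⨆ j', |(A k).1 i' j' - (B k).1 i' j'|)
        (Set.Finite.bddAbove (Set.finite_range _)) i
    have h3 : max (⨆ i', ⨆ j', |(A k).1 i' j' - (B k).1 i' j'|)
        (⨆ i', |(A k).2 i' - (B k).2 i'|) ≤ δ := by
      rw [hδdef, paramDist]
      exact le_ciSup (f := fun k' : Fin L =>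
        max (⨆ i, ⨆ j, |(A (k' : ℕ)).1 i j - (B (k' : ℕ)).1 i j|)
          (⨆ i, |(A (k' : ℕ)).2 i - (B (k' : ℕ)).2 i|))
        (Set.Finite.bddAbove (Set.finite_range _)) (⟨k, hk⟩ : Fin L)
    exact ((h1.trans h2).trans (le_max_left _ _)).trans h3
  have hδb : ∀ k, k < L → ∀ i, |(A k).2 i - (B k).2 i| ≤ δ := by
    intro k hk i
    have h1 : |(A k).2 i - (B k).2 i| ≤ ⨆ i', |(A k).2 i' - (B k).2 i'| :=
      le_ciSup (f := fun i' => |(A k).2 i' - (B k).2 i'|)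
        (Set.Finite.bddAbove (Set.finite_range _)) i
    have h3 : max (⨆ i', ⨆ j', |(A k).1 i' j' - (B k).1 i' j'|)
        (⨆ i', |(A k).2 i' - (B k).2 i'|) ≤ δ := by
      rw [hδdef, paramDist]
      exact le_ciSup (f := fun k' : Fin L =>
        max (⨆ i, ⨆ j, |(A (k' : ℕ)).1 i j - (B (k' : ℕ)).1 i j|)
          (⨆ i, |(A (k' : ℕ)).2 i - (B (k' : ℕ)).2 i|))
        (Set.Finite.bddAbove (Set.finite_range _)) (⟨k, hk⟩ : Fin L)
    exact (h1.trans (le_max_right _ _)).trans h3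
  have hδ0 : (0:ℝ) ≤ δ := by
    have h0 : (0:ℝ) ≤ max (⨆ i', ⨆ j', |(A 0).1 i' j' - (B 0).1 i' j'|)
        (⨆ i', |(A 0).2 i' - (B 0).2 i'|) :=
      le_max_of_le_right (Real.iSup_nonneg fun i => abs_nonneg _)
    have h3 : max (⨆ i', ⨆ j', |(A 0).1 i' j' - (B 0).1 i' j'|)
        (⨆ i', |(A 0).2 i' - (B 0).2 i'|) ≤ δ := by
      rw [hδdef, paramDist]
      exact le_ciSup (f := fun k' : Fin L =>
        max (⨆ i, ⨆ j, |(A (k' : ℕ)).1 i j - (B (k' : ℕ)).1 i j|)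
          (⨆ i, |(A (k' : ℕ)).2 i - (B (k' : ℕ)).2 i|))
        (Set.Finite.bddAbove (Set.finite_range _)) (⟨0, by omega⟩ : Fin L)
    linarith
  -- bound on the input
  have hxα : ∀ i, |x i| ≤ α := by
    intro i
    obtain ⟨h1, h2⟩ := hx i
    have ha' : -α ≤ a := by
      have h := neg_abs_le a
      linarith
    have hb' : b ≤ α := le_trans (le_abs_self b) hbα
    exact abs_le.mpr ⟨by linarith, by linarith⟩
  -- bound on forward passes
  have hfwdbd : ∀ (C : NNParams l), ∀ k, k < L → ∀ i, |nnFwd σ L C k x i| ≤ α := by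
    intro C k hk i
    match k with
    | 0 => exact hxα i
    | (n+1) =>
      have hne : n + 1 ≠ L := Nat.ne_of_lt hk
      show |layerFun σ L C n (nnFwd σ L C n x) i| ≤ α
      rw [layerFun, if_neg hne]
      exact hσα _
  -- difference of affine layers
  have haff : ∀ k, k < L → ∀ (z z' : Fin (l k) → ℝ) (Δ : ℝ), 0 ≤ Δ →
      (∀ j, |z j| ≤ α) → (∀ j, |z j - z' j| ≤ Δ) →
      ∀ i, |layerAffine A k z i - layerAffine B k z' i|
        ≤ (l k : ℝ) * (α * δ + R * Δ) + δ := by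
    intro k hk z z' Δ hΔ hz hzz i
    have hterm : ∀ j, |(A k).1 i j * z j - (B k).1 i j * z' j| ≤ α * δ + R * Δ := by
      intro j
      have heq : (A k).1 i j * z j - (B k).1 i j * z' j
          = ((A k).1 i j - (B k).1 i j) * z j + (B k).1 i j * (z j - z' j) := by ring
      rw [heq]
      have h1 : |((A k).1 i j - (B k).1 i j) * z j| ≤ δ * α := by
        rw [abs_mul]
        exact mul_le_mul (hδW k hk i j) (hz j) (abs_nonneg _) hδ0
      have h2 : |(B k).1 i j * (z j - z' j)| ≤ R * Δ := by
        rw [abs_mul]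
        exact mul_le_mul ((hB k hk).1 i j) (hzz j) (abs_nonneg _) hR0
      calc |((A k).1 i j - (B k).1 i j) * z j + (B k).1 i j * (z j - z' j)|
          ≤ |((A k).1 i j - (B k).1 i j) * z j| + |(B k).1 i j * (z j - z' j)| :=
            abs_add_le _ _
        _ ≤ δ * α + R * Δ := add_le_add h1 h2
        _ = α * δ + R * Δ := by ring
    have heq : layerAffine A k z i - layerAffine B k z' i
        = (∑ j, ((A k).1 i j * z j - (B k).1 i j * z' j))
          + ((A k).2 i - (B k).2 i) := by
      rw [layerAffine, layerAffine, Finset.sum_sub_distrib]; ring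
    rw [heq]
    have hsum : |∑ j, ((A k).1 i j * z j - (B k).1 i j * z' j)|
        ≤ (l k : ℝ) * (α * δ + R * Δ) := by
      calc |∑ j, ((A k).1 i j * z j - (B k).1 i j * z' j)|
          ≤ ∑ j, |(A k).1 i j * z j - (B k).1 i j * z' j| :=
            Finset.abs_sum_le_sum_abs _ _
        _ ≤ (Finset.univ : Finset (Fin (l k))).card • (α * δ + R * Δ) :=
            Finset.sum_le_card_nsmul _ _ _ (fun j _ => hterm j)
        _ = (l k : ℝ) * (α * δ + R * Δ) := by
            simp [nsmul_eq_mul]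
            ring
    calc |(∑ j, ((A k).1 i j * z j - (B k).1 i j * z' j)) + ((A k).2 i - (B k).2 i)|
        ≤ |∑ j, ((A k).1 i j * z j - (B k).1 i j * z' j)| + |(A k).2 i - (B k).2 i| :=
          abs_add_le _ _
      _ ≤ (l k : ℝ) * (α * δ + R * Δ) + δ := add_le_add hsum (hδb k hk i)
  -- difference of full layers
  have hlayer : ∀ k, k < L → ∀ (z z' : Fin (l k) → ℝ) (Δ : ℝ), 0 ≤ Δ →
      (∀ j, |z j| ≤ α) → (∀ j, |z j - z' j| ≤ Δ) →
      ∀ i, |layerFun σ L A k z i - layerFun σ L B k z' i|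
        ≤ β * ((l k : ℝ) * (α * δ + R * Δ) + δ) := by
    intro k hk z z' Δ hΔ hz hzz i
    have hbase := haff k hk z z' Δ hΔ hz hzz i
    have hpos : (0:ℝ) ≤ (l k : ℝ) * (α * δ + R * Δ) + δ :=
      add_nonneg (mul_nonneg (Nat.cast_nonneg _)
        (add_nonneg (mul_nonneg hα0 hδ0) (mul_nonneg hR0 hΔ))) hδ0
    by_cases hkl : k + 1 = L
    · rw [layerFun, layerFun, if_pos hkl, if_pos hkl]
      exact hbase.trans (le_mul_of_one_le_left hpos hβ1)
    · rw [layerFun, layerFun, if_neg hkl, if_neg hkl]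
      exact (hlip _ _).trans (mul_le_mul_of_nonneg_left hbase hβ0)
  -- main induction with strengthened constant
  have main : ∀ K', 1 ≤ K' → K' ≤ L → ∀ i : Fin (l K'),
      |nnFwd σ L A K' x i - nnFwd σ L B K' x i|
        ≤ α * ((d:ℝ) + 4 - 3 * (1/2:ℝ)^(K'-1)) * (W:ℝ)^(K'-1) * R^(K'-1) * β^K' * δ := by
    intro K'
    induction K' with
    | zero => intro h; omega
    | succ n ih =>
      intro _ hK i
      have hnL : n < L := by omega
      simp only [Nat.add_sub_cancel]
      by_cases hn : n = 0
      · subst hn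
        have h := hlayer 0 (by omega) x x 0 le_rfl hxα (fun j => by simp) i
        have hl0d : (l 0 : ℝ) = (d : ℝ) := by exact_mod_cast congrArg Nat.cast hl0
        rw [hl0d] at h
        show |layerFun σ L A 0 (nnFwd σ L A 0 x) i
            - layerFun σ L B 0 (nnFwd σ L B 0 x) i| ≤ _
        have h' : |layerFun σ L A 0 (nnFwd σ L A 0 x) i
            - layerFun σ L B 0 (nnFwd σ L B 0 x) i|
            ≤ β * ((d:ℝ) * (α * δ + R * 0) + δ) := h
        have hd0 : (0:ℝ) ≤ (d:ℝ) := Nat.cast_nonneg _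
        calc |layerFun σ L A 0 (nnFwd σ L A 0 x) i
            - layerFun σ L B 0 (nnFwd σ L B 0 x) i|
            ≤ β * ((d:ℝ) * (α * δ + R * 0) + δ) := h'
          _ ≤ α * ((d:ℝ) + 4 - 3 * (1/2:ℝ)^(0:ℕ)) * (W:ℝ)^(0:ℕ) * R^(0:ℕ) * β^1 * δ := by
              simp only [pow_zero, pow_one]
              nlinarith [mul_nonneg hd0 hδ0, mul_nonneg hβ0 hδ0,
                mul_nonneg (mul_nonneg hd0 hδ0) (by linarith : (0:ℝ) ≤ α - 1),
                mul_nonneg hδ0 (by linarith : (0:ℝ) ≤ α - 1),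
                mul_nonneg (mul_nonneg hβ0 hδ0) (by linarith : (0:ℝ) ≤ α - 1),
                mul_nonneg (mul_nonneg (mul_nonneg hβ0 hd0) hδ0)
                  (by linarith : (0:ℝ) ≤ α - 1),
                mul_nonneg (mul_nonneg hd0 (mul_nonneg hα0 hδ0))
                  (by linarith : (0:ℝ) ≤ β - 1),
                mul_nonneg hδ0 (by linarith : (0:ℝ) ≤ β - 1)]
      · have hn1 : 1 ≤ n := by omega
        set q : ℝ := (1/2:ℝ)^(n-1) with hq
        set P : ℝ := (W:ℝ)^(n-1) with hP
        set Rn : ℝ := R^(n-1) with hRn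
        set Bn : ℝ := β^n with hBn
        set Δ : ℝ := α * ((d:ℝ) + 4 - 3 * q) * P * Rn * Bn * δ with hΔdef
        have hih : ∀ j, |nnFwd σ L A n x j - nnFwd σ L B n x j| ≤ Δ :=
          ih hn1 (by omega)
        have hq0 : (0:ℝ) < q := pow_pos (by norm_num) _
        have hq1 : q ≤ 1 := pow_le_one₀ (by norm_num) (by norm_num)
        have hP1 : (1:ℝ) ≤ P := one_le_pow₀ (by exact_mod_cast hW.trans' (by norm_num))
        have hRn1 : (1:ℝ) ≤ Rn := one_le_pow₀ hR
        have hBn1 : (1:ℝ) ≤ Bn := one_le_pow₀ hβ1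
        have hqP : (1:ℝ) ≤ q * P := by
          have : q * P = ((1/2:ℝ) * W)^(n-1) := by rw [hq, hP, mul_pow]
          rw [this]
          refine one_le_pow₀ ?_
          have : (2:ℝ) ≤ (W:ℝ) := by exact_mod_cast hW
          linarith
        have hconst0 : (0:ℝ) ≤ (d:ℝ) + 4 - 3 * q := by
          have hd0 : (0:ℝ) ≤ (d:ℝ) := Nat.cast_nonneg _
          linarith
        have hΔ0 : (0:ℝ) ≤ Δ := by
          rw [hΔdef]
          have : (0:ℝ) ≤ α * ((d:ℝ) + 4 - 3 * q) :=
            mul_nonneg hα0 hconst0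
          positivity
        have hzb : ∀ j, |nnFwd σ L A n x j| ≤ α := hfwdbd A n hnL
        have h := hlayer n hnL _ _ Δ hΔ0 hzb hih i
        have hlnW : (l n : ℝ) ≤ (W:ℝ) := by exact_mod_cast hlW n (by omega)
        have hW2 : (2:ℝ) ≤ (W:ℝ) := by exact_mod_cast hW
        have hinner0 : (0:ℝ) ≤ α * δ + R * Δ :=
          add_nonneg (mul_nonneg hα0 hδ0) (mul_nonneg hR0 hΔ0)
        have h2 : |nnFwd σ L A (n+1) x i - nnFwd σ L B (n+1) x i|
            ≤ β * ((W:ℝ) * (α * δ + R * Δ) + δ) := by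
          refine h.trans ?_
          have : (l n : ℝ) * (α * δ + R * Δ) ≤ (W:ℝ) * (α * δ + R * Δ) :=
            mul_le_mul_of_nonneg_right hlnW hinner0
          nlinarith [hβ0]
        refine h2.trans ?_
        -- target: α * (d + 4 - 3 * (1/2)^n) * W^n * R^n * β^(n+1) * δ
        have hpowq : (1/2:ℝ)^n = q * (1/2) := by
          rw [hq, ← pow_succ]
          congr 1
          omega
        have hpowW : (W:ℝ)^n = P * W := by
          rw [hP, ← pow_succ]
          congr 1
          omega
        have hpowR : R^n = Rn * R := by
          rw [hRn, ← pow_succ]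
          congr 1
          omega
        have hpowβ : β^(n+1) = Bn * β := by rw [hBn, pow_succ]
        rw [hpowq, hpowW, hpowR, hpowβ, hΔdef]
        -- remaining purely arithmetic inequality
        -- β*(W*(α*δ + R*(α*(d+4-3q)*P*Rn*Bn*δ)) + δ)
        --   ≤ α*(d+4-3*(q/2))*(P*W)*(Rn*R)*(Bn*β)*δ
        have key : β * ((W:ℝ) * α * δ) + β * δ
            ≤ α * (3/2 * q) * (P * (W:ℝ)) * (Rn * R) * (Bn * β) * δ := by
          have hWα2 : (2:ℝ) ≤ (W:ℝ) * α := by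
            calc (2:ℝ) = 2 * 1 := by norm_num
              _ ≤ (W:ℝ) * α := mul_le_mul hW2 hα1 zero_le_one (by linarith)
          have hβδ0 : (0:ℝ) ≤ β * δ := mul_nonneg hβ0 hδ0
          have e1 : β * ((W:ℝ) * α * δ) + β * δ ≤ (3/2) * ((W:ℝ) * α) * β * δ := by
            nlinarith [mul_nonneg (sub_nonneg.mpr hWα2) hβδ0]
          refine e1.trans ?_
          have e2 : (3/2) * ((W:ℝ) * α) * β * δ
              = (3/2 * α) * (1 * ((W:ℝ) * (1 * (β * δ)))) := by ring
          have e3 : α * (3/2 * q) * (P * (W:ℝ)) * (Rn * R) * (Bn * β) * δ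
              = (3/2 * α) * ((q * P) * ((W:ℝ) * ((Rn * R) * (Bn * (β * δ))))) := by ring
          rw [e2, e3]
          have h32α : (0:ℝ) ≤ 3/2 * α := by linarith
          refine mul_le_mul_of_nonneg_left ?_ h32α
          have hβδ : (0:ℝ) ≤ β * δ := mul_nonneg hβ0 hδ0
          have hRR : (1:ℝ) ≤ Rn * R := one_le_mul_of_one_le_of_one_le hRn1 hR
          have hBB : (1:ℝ) ≤ Bn := hBn1
          have step1 : (1:ℝ) * ((W:ℝ) * (1 * (β * δ)))
              ≤ (q * P) * ((W:ℝ) * (1 * (β * δ))) := by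
            refine mul_le_mul_of_nonneg_right hqP ?_
            positivity
          refine step1.trans ?_
          refine mul_le_mul_of_nonneg_left ?_ (by linarith : (0:ℝ) ≤ q * P)
          refine mul_le_mul_of_nonneg_left ?_ (by positivity : (0:ℝ) ≤ (W:ℝ))
          calc (1:ℝ) * (β * δ) ≤ (Rn * R) * (β * δ) :=
                mul_le_mul_of_nonneg_right hRR hβδ
            _ ≤ (Rn * R) * (Bn * (β * δ)) := by
                refine mul_le_mul_of_nonneg_left ?_ (by linarith : (0:ℝ) ≤ Rn * R)
                exact le_mul_of_one_le_left hβδ hBB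
        nlinarith [key]
  -- conclude
  have hmain := main K hK1 hKL
  intro i
  refine (hmain i).trans ?_
  have hq0 : (0:ℝ) ≤ 3 * (1/2:ℝ)^(K-1) := by positivity
  have hd0 : (0:ℝ) ≤ (d:ℝ) := Nat.cast_nonneg _
  have h1 : (d:ℝ) + 4 - 3 * (1/2:ℝ)^(K-1) ≤ (d:ℝ) + 4 := by linarith
  have hpos : (0:ℝ) ≤ (W:ℝ)^(K-1) * R^(K-1) * β^K * δ := by positivity
  calc α * ((d:ℝ) + 4 - 3 * (1/2:ℝ)^(K-1)) * (W:ℝ)^(K-1) * R^(K-1) * β^K * δ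
      = α * ((d:ℝ) + 4 - 3 * (1/2:ℝ)^(K-1)) * ((W:ℝ)^(K-1) * R^(K-1) * β^K * δ) := by
        ring
    _ ≤ α * ((d:ℝ) + 4) * ((W:ℝ)^(K-1) * R^(K-1) * β^K * δ) := by
        refine mul_le_mul_of_nonneg_right ?_ hpos
        exact mul_le_mul_of_nonneg_left h1 hα0
    _ = α * ((d:ℝ) + 4) * (W:ℝ)^(K-1) * R^(K-1) * β^K * δ := by ring
end

section
/- Let d, L, W ∈ ℕ with L, W ≥ 2, R ≥ 1, a < b, let σ : ℝ → ℝ be three times continuously differentiable with σ, σ', σ'', σ''' bounded, and let θ, ϑ be parameters of neural networks with activation σ, the same architecture with at most L layers, widths at most W (with l_0 = d), and all weights and biases in [−R,R]. Set α = max{1,|a|,|b|,‖σ‖_∞} and β = max{1,‖σ'‖_∞,‖σ''‖_∞,‖σ'''‖_∞}, and for 1 ≤ k ≤ L write J_k^θ(x) and H_k^θ(x) for the layer-k Jacobian and Hessian evaluated at the output of the first k−1 layers, and (·)_i for the i-th component slice. Then for all 1 ≤ k ≤ L, all x ∈ [a,b]^d and all components i: ‖J_k^θ(x)_i − J_k^ϑ(x)_i‖_∞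 ≤ β ( 1 + α(d+4) W^{k−1} R^k β^{k−1} + R(αW+1) ) ‖θ−ϑ‖_∞ and ‖H_k^θ(x)_i − H_k^ϑ(x)_i‖_∞ ≤ 2βR ( 1 + α(d+4) W^{k−1} R^k β^{k−1} + R(αW+1) ) ‖θ−ϑ‖_∞, where ‖·‖_∞ on matrices and tensors is the entrywise supremum norm and ‖θ−ϑ‖_∞ the maximal entrywise difference of weights and biases. -/
/-- `J_{k+1}^θ(x)`: Jacobian matrix of layer number `k` evaluated at the output of the
previous layers. -/
noncomputable def layerJac (σ : ℝ → ℝ) (L : ℕ) {l : ℕ → ℕ} (A : NNParams l) (k : ℕ)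
    (x : Fin (l 0) → ℝ) (i : Fin (l (k + 1))) (j : Fin (l k)) : ℝ :=
  fderiv ℝ (fun z => layerFun σ L A k z i) (nnFwd σ L A k x) (Pi.single j 1)

/-- `H_{k+1}^θ(x)`: Hessian tensor of layer number `k` evaluated at the output of the
previous layers. -/
noncomputable def layerHess (σ : ℝ → ℝ) (L : ℕ) {l : ℕ → ℕ} (A : NNParams l) (k : ℕ)
    (x : Fin (l 0) → ℝ) (i : Fin (l (k + 1))) (j j' : Fin (l k)) : ℝ :=
  fderiv ℝ (fun z => fderiv ℝ (fun w => layerFun σ L A k w i) z (Pi.single j 1))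
    (nnFwd σ L A k x) (Pi.single j' 1)

section aux

noncomputable def affCLM (n : ℕ) (c : Fin n → ℝ) : (Fin n → ℝ) →L[ℝ] ℝ :=
  ∑ j, c j • (ContinuousLinearMap.proj j : (Fin n → ℝ) →L[ℝ] ℝ)

lemma affCLM_single {n : ℕ} (c : Fin n → ℝ) (j : Fin n) :
    affCLM n c (Pi.single j 1) = c j := by
  simp [affCLM, ContinuousLinearMap.sum_apply, Pi.single_apply]

lemma hasFDerivAt_aff {n : ℕ} (c : Fin n → ℝ) (b : ℝ) (z : Fin n → ℝ) :
    HasFDerivAt (fun z : Fin n → ℝ => ∑ j, c j * z j + b) (affCLM n c) z := by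
  have : HasFDerivAt (fun z : Fin n → ℝ => ∑ j, c j * z j) (affCLM n c) z := by
    apply HasFDerivAt.fun_sum
    intro j _
    simpa [smul_eq_mul] using
      ((ContinuousLinearMap.proj j : (Fin n → ℝ) →L[ℝ] ℝ).hasFDerivAt (x := z)).const_mul (c j)
  simpa using this.add_const b

lemma fderiv_aff_single {n : ℕ} (c : Fin n → ℝ) (b : ℝ) (z : Fin n → ℝ) (j : Fin n) :
    fderiv ℝ (fun z : Fin n → ℝ => ∑ j', c j' * z j' + b) z (Pi.single j 1) = c j := by
  rw [(hasFDerivAt_aff c b z).fderiv, affCLM_single]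

lemma fderiv_comp_aff {σ : ℝ → ℝ} (hσ : Differentiable ℝ σ) {n : ℕ} (c : Fin n → ℝ) (b : ℝ)
    (z : Fin n → ℝ) (j : Fin n) :
    fderiv ℝ (fun z : Fin n → ℝ => σ (∑ j', c j' * z j' + b)) z (Pi.single j 1)
      = deriv σ (∑ j', c j' * z j' + b) * c j := by
  have h := ((hσ _).hasDerivAt).comp_hasFDerivAt z (hasFDerivAt_aff c b z)
  simp only [Function.comp_def] at h
  rw [h.fderiv]
  simp [affCLM_single, smul_eq_mul]

lemma fderiv2_comp_aff {σ : ℝ → ℝ} (hσ : Differentiable ℝ σ) (hσ' : Differentiable ℝ (deriv σ))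
    {n : ℕ} (c : Fin n → ℝ) (b : ℝ) (z : Fin n → ℝ) (j j' : Fin n) :
    fderiv ℝ (fun z : Fin n → ℝ =>
        fderiv ℝ (fun w : Fin n → ℝ => σ (∑ j', c j' * w j' + b)) z (Pi.single j 1))
      z (Pi.single j' 1)
      = deriv (deriv σ) (∑ j'', c j'' * z j'' + b) * c j' * c j := by
  have heq : (fun z : Fin n → ℝ =>
      fderiv ℝ (fun w : Fin n → ℝ => σ (∑ j', c j' * w j' + b)) z (Pi.single j 1))
      = fun z => deriv σ (∑ j', c j' * z j' + b) * c j := by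
    funext w; exact fderiv_comp_aff hσ c b w j
  rw [heq]
  have h := (((hσ' _).hasDerivAt).comp_hasFDerivAt z (hasFDerivAt_aff c b z)).mul_const (c j)
  simp only [Function.comp_def] at h
  rw [h.fderiv]
  simp [affCLM_single, smul_eq_mul]
  ring

lemma fderiv2_aff {n : ℕ} (c : Fin n → ℝ) (b : ℝ) (z : Fin n → ℝ) (j j' : Fin n) :
    fderiv ℝ (fun z : Fin n → ℝ =>
        fderiv ℝ (fun w : Fin n → ℝ => ∑ j', c j' * w j' + b) z (Pi.single j 1))
      z (Pi.single j' 1) = 0 := by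
  have heq : (fun z : Fin n → ℝ =>
      fderiv ℝ (fun w : Fin n → ℝ => ∑ j', c j' * w j' + b) z (Pi.single j 1))
      = fun _ => c j := by
    funext w; exact fderiv_aff_single c b w j
  rw [heq, fderiv_fun_const]
  simp

lemma abs_sub_le_of_deriv_bound {f : ℝ → ℝ} {C : ℝ} (hC0 : 0 ≤ C)
    (hf : Differentiable ℝ f) (hC : ∀ t, |deriv f t| ≤ C) (s t : ℝ) :
    |f s - f t| ≤ C * |s - t| := by
  have h := lipschitzWith_of_nnnorm_deriv_le (C := ⟨C, hC0⟩) hf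
    (fun x => by simp [← NNReal.coe_le_coe, nnnorm, Real.norm_eq_abs]; exact hC x)
  have := h.dist_le_mul s t
  simp only [Real.dist_eq] at this; exact this

end aux

section layerlemmas
variable {σ : ℝ → ℝ} {L : ℕ} {l : ℕ → ℕ}

lemma layerFun_eq_last (A : NNParams l) {k : ℕ} (hk : k + 1 = L) (i : Fin (l (k+1))) :
    (fun z => layerFun σ L A k z i)
      = fun z => ∑ j', (A k).1 i j' * z j' + (A k).2 i := by
  funext z; simp [layerFun, hk, layerAffine]

lemma layerFun_eq_mid (A : NNParams l) {k : ℕ} (hk : k + 1 ≠ L) (i : Fin (l (k+1))) :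
    (fun z => layerFun σ L A k z i)
      = fun z => σ (∑ j', (A k).1 i j' * z j' + (A k).2 i) := by
  funext z; simp [layerFun, hk, layerAffine]

lemma layerJac_last (A : NNParams l) {k : ℕ} (hk : k + 1 = L) (x : Fin (l 0) → ℝ)
    (i : Fin (l (k+1))) (j : Fin (l k)) :
    layerJac σ L A k x i j = (A k).1 i j := by
  unfold layerJac
  rw [layerFun_eq_last A hk i, fderiv_aff_single]

lemma layerJac_mid (hσd : Differentiable ℝ σ) (A : NNParams l) {k : ℕ} (hk : k + 1 ≠ L)
    (x : Fin (l 0) → ℝ) (i : Fin (l (k+1))) (j : Fin (l k)) :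
    layerJac σ L A k x i j
      = deriv σ (layerAffine A k (nnFwd σ L A k x) i) * (A k).1 i j := by
  unfold layerJac
  rw [layerFun_eq_mid A hk i, fderiv_comp_aff hσd]
  simp [layerAffine]

lemma layerHess_last (A : NNParams l) {k : ℕ} (hk : k + 1 = L) (x : Fin (l 0) → ℝ)
    (i : Fin (l (k+1))) (j j' : Fin (l k)) :
    layerHess σ L A k x i j j' = 0 := by
  unfold layerHess
  rw [layerFun_eq_last A hk i]
  exact fderiv2_aff _ _ _ _ _

lemma layerHess_mid (hσd : Differentiable ℝ σ) (hσ'd : Differentiable ℝ (deriv σ))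
    (A : NNParams l) {k : ℕ} (hk : k + 1 ≠ L)
    (x : Fin (l 0) → ℝ) (i : Fin (l (k+1))) (j j' : Fin (l k)) :
    layerHess σ L A k x i j j'
      = deriv (deriv σ) (layerAffine A k (nnFwd σ L A k x) i)
          * (A k).1 i j' * (A k).1 i j := by
  unfold layerHess
  rw [layerFun_eq_mid A hk i, fderiv2_comp_aff hσd hσ'd]
  simp [layerAffine]

end layerlemmas

set_option maxHeartbeats 1000000 in
/-- **Lipschitz continuity of the layerwise Jacobians and Hessians in the parameters.**
With `α = max{1,|a|,|b|,‖σ‖_∞}`, `β = max{1,‖σ'‖_∞,‖σ''‖_∞,‖σ'''‖_∞}`, for every layer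
`k+1` (`0 ≤ k < L`), every `x ∈ [a,b]^d` and all indices `i, j, j'`:
`‖J_{k+1}^θ(x)_i − J_{k+1}^ϑ(x)_i‖_∞ ≤ β(1 + α(d+4)W^k R^{k+1} β^k + R(αW+1))‖θ−ϑ‖_∞`
and
`‖H_{k+1}^θ(x)_i − H_{k+1}^ϑ(x)_i‖_∞ ≤ 2βR(1 + α(d+4)W^k R^{k+1} β^k + R(αW+1))‖θ−ϑ‖_∞`
(paper numbering: layer `k+1` here corresponds to `J_k, H_k` with exponents
`W^{k−1}, R^k, β^{k−1}`). -/
theorem nn_jac_hess_lipschitz_in_params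
    (d L W : ℕ) (hL : 2 ≤ L) (hW : 2 ≤ W) (R : ℝ) (hR : 1 ≤ R)
    (a b : ℝ) (hab : a < b)
    (σ : ℝ → ℝ) (hσ : ContDiff ℝ 3 σ)
    (hσbd : BddAbove (Set.range fun x => |σ x|))
    (hσ'bd : BddAbove (Set.range fun x => |deriv σ x|))
    (hσ''bd : BddAbove (Set.range fun x => |deriv (deriv σ) x|))
    (hσ'''bd : BddAbove (Set.range fun x => |deriv (deriv (deriv σ)) x|))
    (l : ℕ → ℕ) (hl0 : l 0 = d) (hlW : ∀ k, 0 < k → l k ≤ W)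
    (A B : NNParams l) (hA : A.inCube L R) (hB : B.inCube L R)
    (α β : ℝ)
    (hα : α = max 1 (max |a| (max |b| (⨆ x : ℝ, |σ x|))))
    (hβ : β = max 1 (max (⨆ x : ℝ, |deriv σ x|)
      (max (⨆ x : ℝ, |deriv (deriv σ) x|) (⨆ x : ℝ, |deriv (deriv (deriv σ)) x|)))) :
    ∀ k : ℕ, k < L →
      ∀ x : Fin (l 0) → ℝ, (∀ i, x i ∈ Set.Icc a b) →
        (∀ (i : Fin (l (k + 1))) (j : Fin (l k)),
          |layerJac σ L A k x i j - layerJac σ L B k x i j|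
            ≤ β * (1 + α * (d + 4) * (W : ℝ) ^ k * R ^ (k + 1) * β ^ k
                + R * (α * W + 1)) * paramDist L A B) ∧
        (∀ (i : Fin (l (k + 1))) (j j' : Fin (l k)),
          |layerHess σ L A k x i j j' - layerHess σ L B k x i j j'|
            ≤ 2 * β * R * (1 + α * (d + 4) * (W : ℝ) ^ k * R ^ (k + 1) * β ^ k
                + R * (α * W + 1)) * paramDist L A B) := by
  intro k hk x hx
  -- differentiability of σ and its derivatives
  have hσd : Differentiable ℝ σ := hσ.differentiable (by norm_num)
  have hσ1 : ContDiff ℝ 2 (deriv σ) :=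
    ((contDiff_succ_iff_deriv (n := 2)).mp (by norm_num at hσ ⊢; exact hσ)).2.2
  have hσ'd : Differentiable ℝ (deriv σ) := hσ1.differentiable (by norm_num)
  have hσ2 : ContDiff ℝ 1 (deriv (deriv σ)) :=
    ((contDiff_succ_iff_deriv (n := 1)).mp (by norm_num at hσ1 ⊢; exact hσ1)).2.2
  have hσ''d : Differentiable ℝ (deriv (deriv σ)) := hσ2.differentiable (by norm_num)
  -- basic constant facts
  have hα1 : 1 ≤ α := by rw [hα]; exact le_max_left _ _
  have hβ1 : 1 ≤ β := by rw [hβ]; exact le_max_left _ _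
  have hα0 : (0:ℝ) ≤ α := by linarith
  have hβ0 : (0:ℝ) ≤ β := by linarith
  have hR0 : (0:ℝ) ≤ R := by linarith
  have hW2 : (2:ℝ) ≤ (W:ℝ) := by exact_mod_cast hW
  have hW1 : (1:ℝ) ≤ (W:ℝ) := by linarith
  have hd0 : (0:ℝ) ≤ (d:ℝ) := Nat.cast_nonneg d
  have haα : |a| ≤ α := by
    rw [hα]; exact le_trans (le_max_left _ _) (le_max_right _ _)
  have hbα : |b| ≤ α := by
    rw [hα]
    exact le_trans (le_trans (le_max_left _ _) (le_max_right _ _)) (le_max_right _ _)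
  have hσle : ∀ t, |σ t| ≤ α := by
    intro t
    refine le_trans (le_ciSup hσbd t) ?_
    rw [hα]
    exact le_trans (le_trans (le_trans (le_max_right _ _) (le_max_right _ _))
      (le_max_right _ _)) le_rfl
  have hσ'le : ∀ t, |deriv σ t| ≤ β := by
    intro t
    refine le_trans (le_ciSup hσ'bd t) ?_
    rw [hβ]
    exact le_trans (le_max_left _ _) (le_max_right _ _)
  have hσ''le : ∀ t, |deriv (deriv σ) t| ≤ β := by
    intro t
    refine le_trans (le_ciSup hσ''bd t) ?_
    rw [hβ]
    exact le_trans (le_trans (le_max_left _ _) (le_max_right _ _)) (le_max_right _ _)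
  have hσ'''le : ∀ t, |deriv (deriv (deriv σ)) t| ≤ β := by
    intro t
    refine le_trans (le_ciSup hσ'''bd t) ?_
    rw [hβ]
    exact le_trans (le_trans (le_max_right _ _) (le_max_right _ _)) (le_max_right _ _)
  -- Lipschitz bounds
  have hσlip : ∀ s t : ℝ, |σ s - σ t| ≤ β * |s - t| :=
    abs_sub_le_of_deriv_bound hβ0 hσd hσ'le
  have hσ'lip : ∀ s t : ℝ, |deriv σ s - deriv σ t| ≤ β * |s - t| :=
    abs_sub_le_of_deriv_bound hβ0 hσ'd hσ''le
  have hσ''lip : ∀ s t : ℝ, |deriv (deriv σ) s - deriv (deriv σ) t| ≤ β * |s - t| :=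
    abs_sub_le_of_deriv_bound hβ0 hσ''d hσ'''le
  -- paramDist facts
  set δ := paramDist L A B with hδdef
  have hδ0 : 0 ≤ δ := by
    rw [hδdef, paramDist]
    apply Real.iSup_nonneg
    intro kk
    exact le_trans (Real.iSup_nonneg fun i => Real.iSup_nonneg fun j => abs_nonneg _)
      (le_max_left _ _)
  have hδW : ∀ m, m < L → ∀ (i : Fin (l (m+1))) (j : Fin (l m)),
      |(A m).1 i j - (B m).1 i j| ≤ δ := by
    intro m hm i j
    calc |(A m).1 i j - (B m).1 i j|
        ≤ ⨆ j', |(A m).1 i j' - (B m).1 i j'| :=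
          le_ciSup (f := fun j' => |(A m).1 i j' - (B m).1 i j'|)
            (Set.finite_range _).bddAbove j
      _ ≤ ⨆ i', ⨆ j', |(A m).1 i' j' - (B m).1 i' j'| :=
          le_ciSup (f := fun i' => ⨆ j', |(A m).1 i' j' - (B m).1 i' j'|)
            (Set.finite_range _).bddAbove i
      _ ≤ max (⨆ i', ⨆ j', |(A m).1 i' j' - (B m).1 i' j'|)
            (⨆ i', |(A m).2 i' - (B m).2 i'|) := le_max_left _ _
      _ ≤ δ := by
          rw [hδdef, paramDist]
          exact le_ciSup (f := fun kk : Fin L =>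
            max (⨆ i, ⨆ j, |(A (kk:ℕ)).1 i j - (B (kk:ℕ)).1 i j|)
              (⨆ i, |(A (kk:ℕ)).2 i - (B (kk:ℕ)).2 i|))
            (Set.finite_range _).bddAbove (⟨m, hm⟩ : Fin L)
  have hδb : ∀ m, m < L → ∀ (i : Fin (l (m+1))),
      |(A m).2 i - (B m).2 i| ≤ δ := by
    intro m hm i
    calc |(A m).2 i - (B m).2 i|
        ≤ ⨆ i', |(A m).2 i' - (B m).2 i'| :=
          le_ciSup (f := fun i' => |(A m).2 i' - (B m).2 i'|)
            (Set.finite_range _).bddAbove i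
      _ ≤ max (⨆ i', ⨆ j', |(A m).1 i' j' - (B m).1 i' j'|)
            (⨆ i', |(A m).2 i' - (B m).2 i'|) := le_max_right _ _
      _ ≤ δ := by
          rw [hδdef, paramDist]
          exact le_ciSup (f := fun kk : Fin L =>
            max (⨆ i, ⨆ j, |(A (kk:ℕ)).1 i j - (B (kk:ℕ)).1 i j|)
              (⨆ i, |(A (kk:ℕ)).2 i - (B (kk:ℕ)).2 i|))
            (Set.finite_range _).bddAbove (⟨m, hm⟩ : Fin L)
  -- forward bound
  have fwdle : ∀ (C : NNParams l), C.inCube L R → ∀ m, m < L → ∀ i,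
      |nnFwd σ L C m x i| ≤ α := by
    intro C hC m hm i
    match m with
    | 0 =>
      obtain ⟨h1, h2⟩ := hx i
      show |x i| ≤ α
      rw [abs_le]
      constructor
      · calc -α ≤ -|a| := neg_le_neg haα
          _ ≤ a := neg_abs_le a
          _ ≤ x i := h1
      · calc x i ≤ b := h2
          _ ≤ |b| := le_abs_self b
          _ ≤ α := hbα
    | m + 1 =>
      have hne : m + 1 ≠ L := by omega
      show |layerFun σ L C m (nnFwd σ L C m x) i| ≤ α
      unfold layerFun
      rw [if_neg hne]
      exact hσle _
  -- unfolding of nnFwd in the middle layers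
  have fwdσ : ∀ (C : NNParams l) (m : ℕ), m + 1 ≠ L → ∀ i,
      nnFwd σ L C (m+1) x i = σ (layerAffine C m (nnFwd σ L C m x) i) := by
    intro C m hne i
    show layerFun σ L C m (nnFwd σ L C m x) i = _
    unfold layerFun
    rw [if_neg hne]
  -- difference of affine parts
  have affdiff : ∀ m, m < L → ∀ (D : ℝ), 0 ≤ D →
      (∀ j, |nnFwd σ L A m x j - nnFwd σ L B m x j| ≤ D) →
      ∀ (i : Fin (l (m+1))),
      |layerAffine A m (nnFwd σ L A m x) i - layerAffine B m (nnFwd σ L B m x) i|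
        ≤ (l m : ℝ) * (α * δ + R * D) + δ := by
    intro m hm D hD0 hD i
    have h1 : layerAffine A m (nnFwd σ L A m x) i - layerAffine B m (nnFwd σ L B m x) i
        = (∑ j, ((A m).1 i j * nnFwd σ L A m x j - (B m).1 i j * nnFwd σ L B m x j))
          + ((A m).2 i - (B m).2 i) := by
      simp [layerAffine, Finset.sum_sub_distrib]
      ring
    rw [h1]
    refine (abs_add_le _ _).trans ?_
    have h2 : |∑ j, ((A m).1 i j * nnFwd σ L A m x j - (B m).1 i j * nnFwd σ L B m x j)|
        ≤ (l m : ℝ) * (α * δ + R * D) := by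
      refine (Finset.abs_sum_le_sum_abs _ _).trans ?_
      have hterm : ∀ j ∈ Finset.univ,
          |(A m).1 i j * nnFwd σ L A m x j - (B m).1 i j * nnFwd σ L B m x j|
            ≤ α * δ + R * D := by
        intro j _
        have e : (A m).1 i j * nnFwd σ L A m x j - (B m).1 i j * nnFwd σ L B m x j
            = ((A m).1 i j - (B m).1 i j) * nnFwd σ L A m x j
              + (B m).1 i j * (nnFwd σ L A m x j - nnFwd σ L B m x j) := by ring
        rw [e]
        refine (abs_add_le _ _).trans ?_
        have t1 : |((A m).1 i j - (B m).1 i j) * nnFwd σ L A m x j| ≤ δ * α := by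
          rw [abs_mul]
          exact mul_le_mul (hδW m hm i j) (fwdle A hA m hm j) (abs_nonneg _) hδ0
        have t2 : |(B m).1 i j * (nnFwd σ L A m x j - nnFwd σ L B m x j)| ≤ R * D := by
          rw [abs_mul]
          exact mul_le_mul ((hB m hm).1 i j) (hD j) (abs_nonneg _) hR0
        nlinarith [t1, t2]
      calc ∑ j, |(A m).1 i j * nnFwd σ L A m x j - (B m).1 i j * nnFwd σ L B m x j|
          ≤ ∑ _j : Fin (l m), (α * δ + R * D) := Finset.sum_le_sum hterm
        _ = (l m : ℝ) * (α * δ + R * D) := by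
            rw [Finset.sum_const, Finset.card_univ, Fintype.card_fin, nsmul_eq_mul]
    linarith [hδb m hm i]
  -- forward differences
  have hpow : ∀ m : ℕ, (1:ℝ) ≤ β ^ (m+1) * (W:ℝ) ^ m * R ^ m := by
    intro m
    have h1 : (1:ℝ) ≤ β ^ (m+1) := one_le_pow₀ hβ1
    have h2 : (1:ℝ) ≤ (W:ℝ) ^ m := one_le_pow₀ hW1
    have h3 : (1:ℝ) ≤ R ^ m := one_le_pow₀ hR
    have h12 : (1:ℝ) ≤ β ^ (m+1) * (W:ℝ) ^ m := by nlinarith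
    nlinarith
  have fwddiff : ∀ m, m + 1 < L → ∀ i,
      |nnFwd σ L A (m+1) x i - nnFwd σ L B (m+1) x i|
        ≤ (α * ((d:ℝ) + 4) * β ^ (m+1) * (W:ℝ) ^ m * R ^ m - 3 * α) * δ := by
    intro m
    induction m with
    | zero =>
      intro h1L i
      have hne : 0 + 1 ≠ L := by omega
      have h0L : 0 < L := by omega
      have hsd := affdiff 0 h0L 0 le_rfl (fun j => by
        show |x j - x j| ≤ 0
        simp) i
      rw [fwdσ A 0 hne i, fwdσ B 0 hne i]
      refine (hσlip _ _).trans ?_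
      have h3 : β * |layerAffine A 0 (nnFwd σ L A 0 x) i
          - layerAffine B 0 (nnFwd σ L B 0 x) i| ≤ β * ((l 0 : ℝ) * (α * δ + R * 0) + δ) :=
        mul_le_mul_of_nonneg_left hsd hβ0
      refine h3.trans ?_
      simp only [zero_add, pow_zero, pow_one, mul_one]
      have hcoef : β * ((d:ℝ) * α + 1) ≤ α * ((d:ℝ) + 4) * β - 3 * α := by
        nlinarith [mul_nonneg (mul_nonneg hα0 hd0) (by linarith : (0:ℝ) ≤ β - 1),
          mul_nonneg hβ0 (by linarith : (0:ℝ) ≤ α - 1),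
          mul_nonneg hα0 (by linarith : (0:ℝ) ≤ β - 1)]
      calc β * ((l 0 : ℝ) * (α * δ + R * 0) + δ) = (β * ((d:ℝ) * α + 1)) * δ := by
            rw [hl0]; ring
        _ ≤ (α * ((d:ℝ) + 4) * β - 3 * α) * δ := mul_le_mul_of_nonneg_right hcoef hδ0
    | succ m ih =>
      intro hmL i
      have hm1 : m + 1 < L := by omega
      have hne : m + 1 + 1 ≠ L := by omega
      have hp := hpow m
      have hDcc : (0:ℝ) ≤ α * ((d:ℝ) + 4) * β ^ (m+1) * (W:ℝ) ^ m * R ^ m - 3 * α := by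
        nlinarith [mul_nonneg (mul_nonneg hα0 (by linarith : (0:ℝ) ≤ (d:ℝ) + 4))
          (by linarith : (0:ℝ) ≤ β ^ (m+1) * (W:ℝ) ^ m * R ^ m - 1),
          mul_nonneg hα0 hd0]
      have hDc0 : (0:ℝ) ≤ (α * ((d:ℝ) + 4) * β ^ (m+1) * (W:ℝ) ^ m * R ^ m - 3 * α) * δ :=
        mul_nonneg hDcc hδ0
      have hsd := affdiff (m+1) hm1 _ hDc0 (ih hm1) i
      rw [fwdσ A (m+1) hne i, fwdσ B (m+1) hne i]
      refine (hσlip _ _).trans ?_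
      have h3 := mul_le_mul_of_nonneg_left hsd hβ0
      refine h3.trans ?_
      have hlk : (l (m+1) : ℝ) ≤ (W:ℝ) := by exact_mod_cast hlW (m+1) (by omega)
      have hW0 : (0:ℝ) ≤ (W:ℝ) := by linarith
      have hinner : (0:ℝ) ≤ α * δ
          + R * ((α * ((d:ℝ) + 4) * β ^ (m+1) * (W:ℝ) ^ m * R ^ m - 3 * α) * δ) := by
        have h6 := mul_nonneg hR0 hDc0
        have h7 := mul_nonneg hα0 hδ0
        linarith
      have h5 : β * ((l (m+1) : ℝ) * (α * δ
            + R * ((α * ((d:ℝ) + 4) * β ^ (m+1) * (W:ℝ) ^ m * R ^ m - 3 * α) * δ)) + δ)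
          ≤ β * ((W:ℝ) * (α * δ
            + R * ((α * ((d:ℝ) + 4) * β ^ (m+1) * (W:ℝ) ^ m * R ^ m - 3 * α) * δ)) + δ) := by
        have h8 := mul_le_mul_of_nonneg_right hlk hinner
        exact mul_le_mul_of_nonneg_left (by linarith) hβ0
      refine h5.trans ?_
      have key : β * (W:ℝ) * α + β + 3 * α ≤ 3 * α * β * (W:ℝ) * R := by
        nlinarith [mul_nonneg (mul_nonneg (mul_nonneg (by linarith : (0:ℝ) ≤ 3*α) hβ0) hW0)
            (by linarith : (0:ℝ) ≤ R - 1),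
          mul_nonneg (mul_nonneg hα0 hβ0) (by linarith : (0:ℝ) ≤ (W:ℝ) - 2),
          mul_nonneg hβ0 (by linarith : (0:ℝ) ≤ α - 1),
          mul_nonneg hα0 (by linarith : (0:ℝ) ≤ β - 1)]
      have hcoef : β * ((W:ℝ) * (α
            + R * (α * ((d:ℝ) + 4) * β ^ (m+1) * (W:ℝ) ^ m * R ^ m - 3 * α)) + 1)
          ≤ α * ((d:ℝ) + 4) * β ^ (m+1+1) * (W:ℝ) ^ (m+1) * R ^ (m+1) - 3 * α := by
        rw [show β ^ (m+1+1) = β ^ (m+1) * β from pow_succ β (m+1),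
          show ((W:ℝ)) ^ (m+1) = (W:ℝ) ^ m * (W:ℝ) from pow_succ (W:ℝ) m,
          show R ^ (m+1) = R ^ m * R from pow_succ R m]
        nlinarith [key]
      calc β * ((W:ℝ) * (α * δ
            + R * ((α * ((d:ℝ) + 4) * β ^ (m+1) * (W:ℝ) ^ m * R ^ m - 3 * α) * δ)) + δ)
          = (β * ((W:ℝ) * (α
            + R * (α * ((d:ℝ) + 4) * β ^ (m+1) * (W:ℝ) ^ m * R ^ m - 3 * α)) + 1)) * δ := by
            ring
        _ ≤ (α * ((d:ℝ) + 4) * β ^ (m+1+1) * (W:ℝ) ^ (m+1) * R ^ (m+1) - 3 * α) * δ :=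
            mul_le_mul_of_nonneg_right hcoef hδ0
  -- positivity of the big constant
  have hE0 : (0:ℝ) ≤ α * ((d:ℝ) + 4) * (W:ℝ) ^ k * R ^ (k+1) * β ^ k := by positivity
  have hRA0 : (0:ℝ) ≤ R * (α * (W:ℝ) + 1) := by positivity
  have hbig1 : (1:ℝ) ≤ β * (1 + α * ((d:ℝ) + 4) * (W:ℝ) ^ k * R ^ (k+1) * β ^ k
      + R * (α * (W:ℝ) + 1)) := by nlinarith
  have hW0 : (0:ℝ) ≤ (W:ℝ) := by linarith
  by_cases hkL : k + 1 = L
  · -- last layer: affine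
    constructor
    · intro i j
      rw [layerJac_last A hkL, layerJac_last B hkL]
      calc |(A k).1 i j - (B k).1 i j| ≤ δ := hδW k hk i j
        _ = 1 * δ := (one_mul δ).symm
        _ ≤ β * (1 + α * ((d:ℝ) + 4) * (W:ℝ) ^ k * R ^ (k+1) * β ^ k
              + R * (α * (W:ℝ) + 1)) * δ := mul_le_mul_of_nonneg_right hbig1 hδ0
    · intro i j j'
      rw [layerHess_last A hkL, layerHess_last B hkL]
      simp only [sub_self, abs_zero]
      have h2 : (0:ℝ) ≤ 2 * β * R := by positivity
      nlinarith [mul_le_mul_of_nonneg_right hbig1 hδ0,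
        mul_nonneg (mul_nonneg h2 (by linarith [hbig1] : (0:ℝ) ≤ 1 + α * ((d:ℝ) + 4) * (W:ℝ) ^ k * R ^ (k+1) * β ^ k + R * (α * (W:ℝ) + 1))) hδ0]
  · -- middle layer
    obtain ⟨S, hS0, hS, hSkey⟩ : ∃ S : ℝ, 0 ≤ S ∧
        (∀ i : Fin (l (k+1)),
          |layerAffine A k (nnFwd σ L A k x) i - layerAffine B k (nnFwd σ L B k x) i| ≤ S) ∧
        R * S ≤ (α * ((d:ℝ) + 4) * (W:ℝ) ^ k * R ^ (k+1) * β ^ k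
          + R * (α * (W:ℝ) + 1)) * δ := by
      match k, hk with
      | 0, hk =>
        have hld : ((l 0 : ℕ) : ℝ) = (d:ℝ) := by rw [hl0]
        refine ⟨(l 0 : ℝ) * (α * δ + R * 0) + δ, ?_, ?_, ?_⟩
        · rw [hld]
          nlinarith [mul_nonneg hα0 hδ0, mul_nonneg hd0 (mul_nonneg hα0 hδ0)]
        · intro i
          exact affdiff 0 hk 0 le_rfl (fun j => by show |x j - x j| ≤ 0; simp) i
        · simp only [zero_add, pow_zero, pow_one, mul_one, one_mul]
          have hcoef : R * ((d:ℝ) * α + 1) ≤ α * ((d:ℝ) + 4) * R + R * (α * (W:ℝ) + 1) := by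
            nlinarith [mul_nonneg (mul_nonneg hα0 hR0) hW0,
              mul_nonneg hα0 hR0]
          calc R * ((l 0 : ℝ) * (α * δ + R * 0) + δ) = (R * ((d:ℝ) * α + 1)) * δ := by
                rw [hld]; ring
            _ ≤ (α * ((d:ℝ) + 4) * R + R * (α * (W:ℝ) + 1)) * δ :=
                mul_le_mul_of_nonneg_right hcoef hδ0
      | m + 1, hk =>
        have hm1 : m + 1 < L := hk
        have hp := hpow m
        have hDcc : (0:ℝ) ≤ α * ((d:ℝ) + 4) * β ^ (m+1) * (W:ℝ) ^ m * R ^ m - 3 * α := by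
          nlinarith [mul_nonneg (mul_nonneg hα0 (by linarith : (0:ℝ) ≤ (d:ℝ) + 4))
            (by linarith : (0:ℝ) ≤ β ^ (m+1) * (W:ℝ) ^ m * R ^ m - 1),
            mul_nonneg hα0 hd0]
        have hDc0 : (0:ℝ) ≤ (α * ((d:ℝ) + 4) * β ^ (m+1) * (W:ℝ) ^ m * R ^ m - 3 * α) * δ :=
          mul_nonneg hDcc hδ0
        have hinner : (0:ℝ) ≤ α * δ
            + R * ((α * ((d:ℝ) + 4) * β ^ (m+1) * (W:ℝ) ^ m * R ^ m - 3 * α) * δ) := by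
          have h6 := mul_nonneg hR0 hDc0
          have h7 := mul_nonneg hα0 hδ0
          linarith
        refine ⟨(W:ℝ) * (α * δ
            + R * ((α * ((d:ℝ) + 4) * β ^ (m+1) * (W:ℝ) ^ m * R ^ m - 3 * α) * δ)) + δ,
          ?_, ?_, ?_⟩
        · nlinarith [mul_nonneg hW0 hinner]
        · intro i
          have hbd := affdiff (m+1) hm1 _ hDc0 (fwddiff m hm1) i
          refine hbd.trans ?_
          have hlk : (l (m+1) : ℝ) ≤ (W:ℝ) := by exact_mod_cast hlW (m+1) (by omega)
          have h8 := mul_le_mul_of_nonneg_right hlk hinner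
          linarith
        · have hcoef : R * ((W:ℝ) * (α
              + R * (α * ((d:ℝ) + 4) * β ^ (m+1) * (W:ℝ) ^ m * R ^ m - 3 * α)) + 1)
            ≤ α * ((d:ℝ) + 4) * (W:ℝ) ^ (m+1) * R ^ (m+1+1) * β ^ (m+1)
              + R * (α * (W:ℝ) + 1) := by
            rw [show ((W:ℝ)) ^ (m+1) = (W:ℝ) ^ m * (W:ℝ) from pow_succ (W:ℝ) m,
              show R ^ (m+1+1) = R ^ m * R * R from by rw [pow_succ, pow_succ],
              show β ^ (m+1) = β ^ m * β from pow_succ β m]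
            nlinarith [mul_nonneg (mul_nonneg (by linarith : (0:ℝ) ≤ 3*α) hW0)
              (mul_nonneg hR0 hR0), mul_nonneg (mul_nonneg hα0 hW0) hR0, mul_nonneg hα0 hR0]
          calc R * ((W:ℝ) * (α * δ
              + R * ((α * ((d:ℝ) + 4) * β ^ (m+1) * (W:ℝ) ^ m * R ^ m - 3 * α) * δ)) + δ)
              = (R * ((W:ℝ) * (α
                + R * (α * ((d:ℝ) + 4) * β ^ (m+1) * (W:ℝ) ^ m * R ^ m - 3 * α)) + 1)) * δ := by
                ring
            _ ≤ (α * ((d:ℝ) + 4) * (W:ℝ) ^ (m+1) * R ^ (m+1+1) * β ^ (m+1)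
                + R * (α * (W:ℝ) + 1)) * δ := mul_le_mul_of_nonneg_right hcoef hδ0
    have hAw : ∀ (i : Fin (l (k+1))) (j : Fin (l k)), |(A k).1 i j| ≤ R := (hA k hk).1
    have hBw : ∀ (i : Fin (l (k+1))) (j : Fin (l k)), |(B k).1 i j| ≤ R := (hB k hk).1
    constructor
    · intro i j
      rw [layerJac_mid hσd A hkL, layerJac_mid hσd B hkL]
      set sA := layerAffine A k (nnFwd σ L A k x) i with hsA
      set sB := layerAffine B k (nnFwd σ L B k x) i with hsB
      have e : deriv σ sA * (A k).1 i j - deriv σ sB * (B k).1 i j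
          = (deriv σ sA - deriv σ sB) * (A k).1 i j
            + deriv σ sB * ((A k).1 i j - (B k).1 i j) := by ring
      rw [e]
      refine (abs_add_le _ _).trans ?_
      have t1 : |(deriv σ sA - deriv σ sB) * (A k).1 i j| ≤ β * S * R := by
        rw [abs_mul]
        refine mul_le_mul ((hσ'lip sA sB).trans ?_) (hAw i j) (abs_nonneg _)
          (by positivity)
        exact mul_le_mul_of_nonneg_left (hS i) hβ0
      have t2 : |deriv σ sB * ((A k).1 i j - (B k).1 i j)| ≤ β * δ := by
        rw [abs_mul]
        exact mul_le_mul (hσ'le sB) (hδW k hk i j) (abs_nonneg _) hβ0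
      have t3 : β * S * R ≤ β * ((α * ((d:ℝ) + 4) * (W:ℝ) ^ k * R ^ (k+1) * β ^ k
          + R * (α * (W:ℝ) + 1)) * δ) := by
        calc β * S * R = β * (R * S) := by ring
          _ ≤ _ := mul_le_mul_of_nonneg_left hSkey hβ0
      linarith [t1, t2, t3]
    · intro i j j'
      rw [layerHess_mid hσd hσ'd A hkL, layerHess_mid hσd hσ'd B hkL]
      set sA := layerAffine A k (nnFwd σ L A k x) i with hsA
      set sB := layerAffine B k (nnFwd σ L B k x) i with hsB
      have e : deriv (deriv σ) sA * (A k).1 i j' * (A k).1 i j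
            - deriv (deriv σ) sB * (B k).1 i j' * (B k).1 i j
          = (deriv (deriv σ) sA - deriv (deriv σ) sB) * (A k).1 i j' * (A k).1 i j
            + deriv (deriv σ) sB * ((A k).1 i j' - (B k).1 i j') * (A k).1 i j
            + deriv (deriv σ) sB * (B k).1 i j' * ((A k).1 i j - (B k).1 i j) := by ring
      rw [e]
      refine (abs_add_le _ _).trans ?_
      have t0 : |(deriv (deriv σ) sA - deriv (deriv σ) sB) * (A k).1 i j' * (A k).1 i j
          + deriv (deriv σ) sB * ((A k).1 i j' - (B k).1 i j') * (A k).1 i j|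
          ≤ β * S * R * R + β * δ * R := by
        refine (abs_add_le _ _).trans ?_
        have t1 : |(deriv (deriv σ) sA - deriv (deriv σ) sB) * (A k).1 i j' * (A k).1 i j|
            ≤ β * S * R * R := by
          rw [abs_mul, abs_mul]
          refine mul_le_mul (mul_le_mul ((hσ''lip sA sB).trans
            (mul_le_mul_of_nonneg_left (hS i) hβ0)) (hAw i j') (abs_nonneg _)
            (by positivity)) (hAw i j) (abs_nonneg _) (by positivity)
        have t2 : |deriv (deriv σ) sB * ((A k).1 i j' - (B k).1 i j') * (A k).1 i j|
            ≤ β * δ * R := by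
          rw [abs_mul, abs_mul]
          exact mul_le_mul (mul_le_mul (hσ''le sB) (hδW k hk i j') (abs_nonneg _) hβ0)
            (hAw i j) (abs_nonneg _) (by positivity)
        linarith
      have t3 : |deriv (deriv σ) sB * (B k).1 i j' * ((A k).1 i j - (B k).1 i j)|
          ≤ β * R * δ := by
        rw [abs_mul, abs_mul]
        exact mul_le_mul (mul_le_mul (hσ''le sB) (hBw i j') (abs_nonneg _) hβ0)
          (hδW k hk i j) (abs_nonneg _) (by positivity)
      have t4 : β * S * R * R ≤ β * R * ((α * ((d:ℝ) + 4) * (W:ℝ) ^ k * R ^ (k+1) * β ^ k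
          + R * (α * (W:ℝ) + 1)) * δ) := by
        calc β * S * R * R = (β * R) * (R * S) := by ring
          _ ≤ _ := mul_le_mul_of_nonneg_left hSkey (mul_nonneg hβ0 hR0)
      have t5 : (0:ℝ) ≤ β * R * ((α * ((d:ℝ) + 4) * (W:ℝ) ^ k * R ^ (k+1) * β ^ k
          + R * (α * (W:ℝ) + 1)) * δ) := by positivity
      linarith [t0, t3, t4, t5]
end
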